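/- arXiv:2411.19831 — 6 statements merged into one kernel-verified Lean document; each statement's English description precedes it below -/
import Mathlib

section
/- Let n ≥ 1, let P(z) = Σ_{j=0}^{n} a_j z^j be a complex polynomial of degree n that has no zero in the open disk |z| < ρ, where ρ ≥ 1, and let s be an integer with 0 ≤ s ≤ n-1. Then for every complex number z with |z| = 1, ρ^s · |a_n z^n + (a_s / C(n,s)) z^s| ≤ |(a_{n-s} / C(n,s)) z^{n-s} + a_0|, where C(n,s) denotes the binomial coefficient n choose s. -/
open Polynomial
set_option maxHeartbeats 1000000

private lemma my_ms_cs (M : Multiset ℝ) :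
    M.sum ^ 2 ≤ (Multiset.card M : ℝ) * (M.map fun x => x ^ 2).sum := by
  induction M using Multiset.induction_on with
  | empty => simp
  | cons a M ih =>
    have h1 : (M.map fun x => 2 * a * x).sum ≤ (M.map fun x => a ^ 2 + x ^ 2).sum :=
      Multiset.sum_map_le_sum_map _ _ fun x _ => two_mul_le_add_sq a x
    have h2 : (M.map fun x => 2 * a * x).sum = 2 * a * M.sum := by
      have := Multiset.sum_map_mul_left (s := M) (a := 2 * a) (f := fun x => x)
      simpa using this
    have h3 : (M.map fun x => a ^ 2 + x ^ 2).sum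
        = (Multiset.card M : ℝ) * a ^ 2 + (M.map fun x => x ^ 2).sum := by
      rw [Multiset.sum_map_add]
      congr 1
      simp [Multiset.map_const', Multiset.sum_replicate, nsmul_eq_mul]
    rw [h2, h3] at h1
    simp only [Multiset.sum_cons, Multiset.card_cons, Multiset.map_cons]
    push_cast
    nlinarith [ih, h1]

private lemma my_deriv_eval (u : ℂ) (M : Multiset ℂ) (h : ∀ x ∈ M, u - x ≠ 0) :
    Polynomial.eval u (Polynomial.derivative (M.map fun a => X - C a).prod)
      = Polynomial.eval u (M.map fun a => X - C a).prod * (M.map fun x => (u - x)⁻¹).sum := by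
  induction M using Multiset.induction_on with
  | empty => simp
  | cons a M ih =>
    have ha : u - a ≠ 0 := h a (Multiset.mem_cons_self a M)
    have ih' := ih fun x hx => h x (Multiset.mem_cons_of_mem hx)
    simp only [Multiset.map_cons, Multiset.prod_cons, derivative_mul, Polynomial.eval_add,
      Polynomial.eval_mul, Multiset.sum_cons, ih']
    simp only [derivative_sub, derivative_X, derivative_C, sub_zero, Polynomial.eval_one,
      Polynomial.eval_sub, Polynomial.eval_X, Polynomial.eval_C, one_mul]
    field_simp

private lemma my_level1 (r : ℝ) (hr : 0 < r) (n : ℕ) (hn : 1 ≤ n) (B : Polynomial ℂ)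
    (hdeg : B.natDegree ≤ n)
    (hroot : ∀ x : ℂ, ‖x‖ ≤ r → Polynomial.eval x B ≠ 0)
    (u ζ : ℂ) (hu : ‖u‖ ≤ r) (hζ : ‖ζ‖ ≤ r) :
    (n : ℂ) * Polynomial.eval u B + (ζ - u) * Polynomial.eval u (Polynomial.derivative B) ≠ 0 := by
  intro H
  have hB0 : B ≠ 0 := fun h => hroot 0 (by simpa using hr.le) (by simp [h])
  have hfac : B = C B.leadingCoeff * (B.roots.map fun a => X - C a).prod :=
    (Polynomial.C_leadingCoeff_mul_prod_multiset_X_sub_C (Polynomial.splits_iff_card_roots.mp (IsAlgClosed.splits B))).symm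
  set M := B.roots with hMdef
  have hmem : ∀ x ∈ M, r < ‖x‖ := by
    intro x hx
    by_contra hc
    push_neg at hc
    exact hroot x hc ((Polynomial.mem_roots hB0).mp hx)
  have hne : ∀ x ∈ M, u - x ≠ 0 := by
    intro x hx h0
    have h1 := hmem x hx
    rw [sub_eq_zero] at h0
    rw [← h0] at h1
    linarith
  set Q := (M.map fun a => X - C a).prod with hQdef
  have hevQ : Polynomial.eval u Q = (M.map fun x => u - x).prod := by
    rw [hQdef, Polynomial.eval_multiset_prod, Multiset.map_map]
    apply congrArg
    apply Multiset.map_congr rfl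
    intro x _
    simp
  have hQ0 : Polynomial.eval u Q ≠ 0 := by
    rw [hevQ]
    apply Multiset.prod_ne_zero
    intro h0
    rw [Multiset.mem_map] at h0
    obtain ⟨x, hx, hx0⟩ := h0
    exact hne x hx hx0
  have hL : B.leadingCoeff ≠ 0 := Polynomial.leadingCoeff_ne_zero.mpr hB0
  have hevB : Polynomial.eval u B = B.leadingCoeff * Polynomial.eval u Q := by
    conv_lhs => rw [hfac]
    simp [hQdef]
  have hevB' : Polynomial.eval u (Polynomial.derivative B)
      = B.leadingCoeff * Polynomial.eval u (Polynomial.derivative Q) := by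
    conv_lhs => rw [hfac]
    simp [hQdef]
  set S := (M.map fun x => (u - x)⁻¹).sum with hSdef
  have hDe := my_deriv_eval u M hne
  rw [hevB, hevB', hDe] at H
  have key : (n : ℂ) = (u - ζ) * S := by
    have h2 : B.leadingCoeff * (Polynomial.eval u Q * ((n : ℂ) + (ζ - u) * S)) = 0 := by
      rw [← H]; ring
    rcases mul_eq_zero.mp h2 with h | h
    · exact absurd h hL
    rcases mul_eq_zero.mp h with h | h
    · exact absurd h hQ0
    · linear_combination h
  set q := u - ζ with hqdef
  have hq0 : q ≠ 0 := by
    intro h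
    rw [h, zero_mul] at key
    have : (n : ℂ) ≠ 0 := Nat.cast_ne_zero.mpr (by omega)
    exact this key
  have hsum_v : (M.map fun x => q * (u - x)⁻¹).sum = (n : ℂ) := by
    rw [Multiset.sum_map_mul_left, ← hSdef, ← key]
  set m := Multiset.card M with hmdef
  have hm_le : m ≤ n := le_trans (Polynomial.card_roots' B) hdeg
  -- abs bound
  have habs : (n : ℝ) ≤ (M.map fun x => ‖q * (u - x)⁻¹‖).sum := by
    have h1 : ‖(M.map fun x => q * (u - x)⁻¹).sum‖
        ≤ (M.map fun x => ‖q * (u - x)⁻¹‖).sum := by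
      simpa [Multiset.map_map, Function.comp] using
        norm_multiset_sum_le (M.map fun x => q * (u - x)⁻¹)
    rw [hsum_v] at h1
    simpa using h1
  set T := (M.map fun x => Complex.normSq (q * (u - x)⁻¹)).sum with hTdef
  have hTnonneg : 0 ≤ T := by
    apply Multiset.sum_nonneg
    intro y hy
    rw [Multiset.mem_map] at hy
    obtain ⟨x, _, rfl⟩ := hy
    exact Complex.normSq_nonneg _
  have hT_n : (n : ℝ) ≤ T := by
    have hcs := my_ms_cs (M.map fun x => ‖q * (u - x)⁻¹‖)
    rw [Multiset.card_map, Multiset.map_map] at hcs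
    have heq : (M.map ((fun x => x ^ 2) ∘ fun x => ‖q * (u - x)⁻¹‖)).sum = T := by
      rw [hTdef]
      congr 1
      apply Multiset.map_congr rfl
      intro x _
      simp only [Function.comp_apply, Complex.sq_norm]
    rw [heq, ← hmdef] at hcs
    have hcast : (m : ℝ) ≤ (n : ℝ) := Nat.cast_le.mpr hm_le
    have hn1 : (1 : ℝ) ≤ (n : ℝ) := by exact_mod_cast hn
    have hc2 : (m : ℝ) * T ≤ (n : ℝ) * T := mul_le_mul_of_nonneg_right hcast hTnonneg
    have e1 : (n : ℝ) * (n : ℝ) ≤ (n : ℝ) * T := by nlinarith [habs, hcs, hc2]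
    exact le_of_mul_le_mul_left e1 (by linarith)
  -- pointwise positivity
  have hptpos : ∀ x ∈ M, r ^ 2 * Complex.normSq (q * (u - x)⁻¹)
      < Complex.normSq (u * (q * (u - x)⁻¹) - q) := by
    intro x hx
    have hxne := hne x hx
    have hid : u * (q * (u - x)⁻¹) - q = q * x * (u - x)⁻¹ := by
      field_simp
      ring
    rw [hid]
    have e1 : Complex.normSq (q * x * (u - x)⁻¹)
        = Complex.normSq q * Complex.normSq x * (Complex.normSq (u - x))⁻¹ := by
      simp [Complex.normSq_mul, Complex.normSq_inv]
    have e2 : Complex.normSq (q * (u - x)⁻¹)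
        = Complex.normSq q * (Complex.normSq (u - x))⁻¹ := by
      simp [Complex.normSq_mul, Complex.normSq_inv]
    rw [e1, e2]
    have h5 : r ^ 2 < Complex.normSq x := by
      have h6 := hmem x hx
      rw [← Complex.sq_norm]
      nlinarith [hr]
    have h6 : 0 < Complex.normSq q := Complex.normSq_pos.mpr hq0
    have h7 : 0 < (Complex.normSq (u - x))⁻¹ :=
      inv_pos.mpr (Complex.normSq_pos.mpr hxne)
    nlinarith [mul_lt_mul_of_pos_right h5 (mul_pos h6 h7)]
  -- m ≥ 1
  have hm1 : M ≠ 0 := by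
    intro h0
    rw [h0] at hsum_v
    simp at hsum_v
    have : (n : ℂ) ≠ 0 := Nat.cast_ne_zero.mpr (by omega)
    exact this hsum_v.symm
  -- positivity of the G sum
  have hGpos : 0 < (M.map fun x => Complex.normSq (u * (q * (u - x)⁻¹) - q)
      - r ^ 2 * Complex.normSq (q * (u - x)⁻¹)).sum := by
    obtain ⟨x0, hx0⟩ := Multiset.exists_mem_of_ne_zero hm1
    obtain ⟨M', hM'⟩ := Multiset.exists_cons_of_mem hx0
    rw [hM', Multiset.map_cons, Multiset.sum_cons]
    have hrest : 0 ≤ (M'.map fun x => Complex.normSq (u * (q * (u - x)⁻¹) - q)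
        - r ^ 2 * Complex.normSq (q * (u - x)⁻¹)).sum := by
      apply Multiset.sum_nonneg
      intro y hy
      rw [Multiset.mem_map] at hy
      obtain ⟨x, hxM, rfl⟩ := hy
      have := hptpos x (by rw [hM']; exact Multiset.mem_cons_of_mem hxM)
      linarith
    have hfirst := hptpos x0 hx0
    linarith
  -- expansion of G
  set w0 := u * (starRingEnd ℂ) q with hw0def
  have hsum_re : (M.map fun x => (w0 * (q * (u - x)⁻¹)).re).sum = (n : ℝ) * w0.re := by
    have h1 : ((M.map fun x => w0 * (q * (u - x)⁻¹)).sum).re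
        = (M.map fun x => (w0 * (q * (u - x)⁻¹)).re).sum := by
      simpa [Multiset.map_map, Function.comp] using
        map_multiset_sum Complex.reAddGroupHom (M.map fun x => w0 * (q * (u - x)⁻¹))
    rw [← h1, Multiset.sum_map_mul_left, hsum_v, Complex.mul_re]
    simp [mul_comm]
  have hexp : (M.map fun x => Complex.normSq (u * (q * (u - x)⁻¹) - q)
      - r ^ 2 * Complex.normSq (q * (u - x)⁻¹)).sum
      = (Complex.normSq u - r ^ 2) * T + ((m : ℝ) * Complex.normSq q - 2 * ((n : ℝ) * w0.re)) := by
    have hpt : ∀ x ∈ M, Complex.normSq (u * (q * (u - x)⁻¹) - q)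
        - r ^ 2 * Complex.normSq (q * (u - x)⁻¹)
        = (Complex.normSq u - r ^ 2) * Complex.normSq (q * (u - x)⁻¹)
          + (Complex.normSq q - 2 * (w0 * (q * (u - x)⁻¹)).re) := by
      intro x _
      rw [Complex.normSq_sub, Complex.normSq_mul]
      have hre : u * (q * (u - x)⁻¹) * (starRingEnd ℂ) q = w0 * (q * (u - x)⁻¹) := by
        rw [hw0def]; ring
      rw [hre]
      ring
    rw [Multiset.map_congr rfl hpt, Multiset.sum_map_add]
    congr 1
    · exact Multiset.sum_map_mul_left (s := M) (a := Complex.normSq u - r ^ 2)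
        (f := fun x => Complex.normSq (q * (u - x)⁻¹))
    · rw [Multiset.sum_map_sub]
      congr 1
      · simp [Multiset.map_const', Multiset.sum_replicate, nsmul_eq_mul, hmdef]
      · have := Multiset.sum_map_mul_left (s := M) (a := (2:ℝ))
          (f := fun x => (w0 * (q * (u - x)⁻¹)).re)
        rw [this, hsum_re]
  -- final contradiction
  have hub : Complex.normSq u ≤ r ^ 2 := by
    rw [← Complex.sq_norm]
    nlinarith [norm_nonneg u]
  have hzb : Complex.normSq ζ ≤ r ^ 2 := by
    rw [← Complex.sq_norm]
    nlinarith [norm_nonneg ζ]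
  have hbound : (Complex.normSq u - r ^ 2) * T ≤ (Complex.normSq u - r ^ 2) * (n : ℝ) :=
    mul_le_mul_of_nonpos_left hT_n (by linarith)
  have hzeta : Complex.normSq ζ = Complex.normSq u + Complex.normSq q - 2 * w0.re := by
    have : ζ = u - q := by rw [hqdef]; ring
    rw [this, Complex.normSq_sub, hw0def]
  have hmq : (0:ℝ) ≤ ((n : ℝ) - (m : ℝ)) * Complex.normSq q := by
    apply mul_nonneg
    · have : (m : ℝ) ≤ (n : ℝ) := Nat.cast_le.mpr hm_le
      linarith
    · exact Complex.normSq_nonneg _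
  have hn1 : (1 : ℝ) ≤ (n : ℝ) := by exact_mod_cast hn
  have h8 : (n : ℝ) * Complex.normSq ζ ≤ (n : ℝ) * r ^ 2 :=
    mul_le_mul_of_nonneg_left hzb (by linarith)
  have h9 : (n : ℝ) * Complex.normSq ζ
      = (n : ℝ) * Complex.normSq u + (n : ℝ) * Complex.normSq q - 2 * ((n : ℝ) * w0.re) := by
    rw [hzeta]; ring
  have h10 : (Complex.normSq u - r ^ 2) * (n : ℝ)
      = (n : ℝ) * Complex.normSq u - (n : ℝ) * r ^ 2 := by ring
  have h11 : (0:ℝ) ≤ (n : ℝ) * Complex.normSq q - (m : ℝ) * Complex.normSq q := by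
    have : ((n : ℝ) - (m : ℝ)) * Complex.normSq q
        = (n : ℝ) * Complex.normSq q - (m : ℝ) * Complex.normSq q := by ring
    linarith [hmq, this.symm.le, this.le]
  linarith [hGpos, hexp, hbound, h8, h9, h10, h11]

private noncomputable def myBp (n : ℕ) (β : ℕ → ℂ) : Polynomial ℂ :=
  ∑ j ∈ Finset.range (n+1), Polynomial.C ((n.choose j : ℂ) * β j) * Polynomial.X ^ j

private lemma myBp_natDegree_le (n : ℕ) (β : ℕ → ℂ) : (myBp n β).natDegree ≤ n := by
  apply Polynomial.natDegree_sum_le_of_forall_le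
  intro j hj
  exact le_trans (Polynomial.natDegree_C_mul_X_pow_le _ _)
    (by simpa [Nat.lt_succ_iff] using hj)

private lemma myBp_eval (n : ℕ) (β : ℕ → ℂ) (u : ℂ) :
    Polynomial.eval u (myBp n β) = ∑ j ∈ Finset.range (n+1), (n.choose j : ℂ) * β j * u ^ j := by
  rw [myBp, Polynomial.eval_finset_sum]
  simp

private lemma myBp_deriv_eval (n : ℕ) (β : ℕ → ℂ) (u : ℂ) :
    Polynomial.eval u (Polynomial.derivative (myBp n β))
      = ∑ j ∈ Finset.range (n+1), (n.choose j : ℂ) * β j * (j : ℂ) * u ^ (j-1) := by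
  rw [myBp, derivative_sum, Polynomial.eval_finset_sum]
  apply Finset.sum_congr rfl
  intro j _
  rw [Polynomial.derivative_C_mul_X_pow]
  simp

private lemma my_level2 (r : ℝ) (hr : 0 < r) :
    ∀ n : ℕ, 1 ≤ n → ∀ β : ℕ → ℂ, ∀ R : Multiset ℂ, Multiset.card R = n →
      (∀ x ∈ R, 1 ≤ r * ‖x‖) →
      (∀ u : ℂ, ‖u‖ ≤ r → Polynomial.eval u (myBp n β) ≠ 0) →
      (∑ j ∈ Finset.range (n+1), β j * ((R.map fun a => X - C a).prod.coeff j)) ≠ 0 := by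
  intro N hN
  induction N, hN using Nat.le_induction with
  | base =>
    intro β R hcard hz hB
    obtain ⟨z, rfl⟩ := Multiset.card_eq_one.mp hcard
    have hz1 := hz z (Multiset.mem_singleton_self z)
    have hzabs : (0:ℝ) < ‖z‖ := by nlinarith [norm_nonneg z]
    have hz0 : z ≠ 0 := by
      intro h; rw [h] at hzabs; simp at hzabs
    intro hsum
    have hcoe : ((({z} : Multiset ℂ).map fun a => X - C a).prod) = X - C z := by simp
    rw [hcoe] at hsum
    rw [Finset.sum_range_succ, Finset.sum_range_one] at hsum
    simp only [Polynomial.coeff_sub, Polynomial.coeff_X_zero, Polynomial.coeff_C_zero,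
      Polynomial.coeff_X_one, Polynomial.coeff_C, if_neg one_ne_zero, zero_sub, sub_zero,
      mul_one, mul_neg] at hsum
    simp only [if_true] at hsum
    have hb1 : β 1 = z * β 0 := by linear_combination hsum
    have habs : ‖-z⁻¹‖ ≤ r := by
      rw [norm_neg, norm_inv]
      rw [inv_eq_one_div, div_le_iff₀ hzabs]
      nlinarith
    apply hB (-z⁻¹) habs
    rw [myBp_eval]
    rw [Finset.sum_range_succ, Finset.sum_range_one]
    simp [hb1]
    field_simp
    ring
  | succ n hn1 ih =>
    intro β R hcard hz hB
    have hR0 : R ≠ 0 := by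
      intro h; rw [h] at hcard; simp at hcard
    obtain ⟨z, hzR⟩ := Multiset.exists_mem_of_ne_zero hR0
    obtain ⟨R', rfl⟩ := Multiset.exists_cons_of_mem hzR
    have hcard' : Multiset.card R' = n := by
      rw [Multiset.card_cons] at hcard; omega
    have hz1 := hz z (Multiset.mem_cons_self z R')
    have hzabs : (0:ℝ) < ‖z‖ := by nlinarith [norm_nonneg z]
    have hz0 : z ≠ 0 := by
      intro h; rw [h] at hzabs; simp at hzabs
    have hζabs : ‖-z⁻¹‖ ≤ r := by
      rw [norm_neg, norm_inv]
      rw [inv_eq_one_div, div_le_iff₀ hzabs]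
      nlinarith
    set β' : ℕ → ℂ := fun i => β (i+1) - z * β i with hβ'
    set Q' := (R'.map fun a => X - C a).prod with hQ'
    have hQ'deg : Q'.natDegree = n := by
      rw [hQ', Polynomial.natDegree_multiset_prod_X_sub_C_eq_card, hcard']
    -- (idA)
    have idA : (∑ j ∈ Finset.range (n+1+1), β j * (((z ::ₘ R').map fun a => X - C a).prod.coeff j))
        = ∑ i ∈ Finset.range (n+1), β' i * Q'.coeff i := by
      rw [Multiset.map_cons, Multiset.prod_cons]
      have e1 : ∀ j, ((X - C z) * Q').coeff j = (X * Q').coeff j - z * Q'.coeff j := by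
        intro j
        rw [sub_mul, Polynomial.coeff_sub, Polynomial.coeff_C_mul]
      have e2 : (∑ j ∈ Finset.range (n+2), β j * ((X * Q').coeff j))
          = ∑ i ∈ Finset.range (n+1), β (i+1) * Q'.coeff i := by
        rw [Finset.sum_range_succ']
        simp only [Polynomial.coeff_X_mul]
        rw [Polynomial.coeff_X_mul_zero]  -- maybe wrong name; fix if needed
        simp
      have e3 : (∑ j ∈ Finset.range (n+2), β j * (z * Q'.coeff j))
          = ∑ j ∈ Finset.range (n+1), β j * (z * Q'.coeff j) := by
        rw [Finset.sum_range_succ]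
        have : Q'.coeff (n+1) = 0 :=
          Polynomial.coeff_eq_zero_of_natDegree_lt (by omega)
        simp [this]
      calc (∑ j ∈ Finset.range (n+1+1), β j * (((X - C z) * Q').coeff j))
          = ∑ j ∈ Finset.range (n+2), (β j * ((X * Q').coeff j) - β j * (z * Q'.coeff j)) := by
            apply Finset.sum_congr rfl
            intro j _
            rw [e1 j]; ring
        _ = (∑ j ∈ Finset.range (n+2), β j * ((X * Q').coeff j))
            - ∑ j ∈ Finset.range (n+2), β j * (z * Q'.coeff j) := Finset.sum_sub_distrib _ _
        _ = ∑ i ∈ Finset.range (n+1), β' i * Q'.coeff i := by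
            rw [e2, e3, ← Finset.sum_sub_distrib]
            apply Finset.sum_congr rfl
            intro i _
            rw [hβ']; ring
    rw [idA]
    -- identity (E)
    have hE : ∀ u : ℂ, ((n:ℂ)+1) * Polynomial.eval u (myBp n β')
        = (-z) * (((n:ℂ)+1) * Polynomial.eval u (myBp (n+1) β)
          + (-z⁻¹ - u) * Polynomial.eval u (Polynomial.derivative (myBp (n+1) β))) := by
      intro u
      set A := ∑ i ∈ Finset.range (n+1), (n.choose i : ℂ) * β (i+1) * u ^ i with hA
      set D := ∑ i ∈ Finset.range (n+1), (n.choose i : ℂ) * β i * u ^ i with hD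
      have lemE1 : Polynomial.eval u (myBp n β') = A - z * D := by
        rw [myBp_eval, hA, hD, Finset.mul_sum, ← Finset.sum_sub_distrib]
        apply Finset.sum_congr rfl
        intro i _
        rw [hβ']
        ring
      have key1 : ∀ i : ℕ, (((n+1).choose (i+1) : ℂ)) * ((i:ℂ)+1) = ((n:ℂ)+1) * (n.choose i : ℂ) := by
        intro i
        have := Nat.add_one_mul_choose_eq n i
        have h2 : ((Nat.succ n * n.choose i : ℕ) : ℂ) = (((n+1).choose (i+1) * (i+1) : ℕ) : ℂ) := by
          rw [this]
        push_cast at h2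
        linear_combination -h2
      have lemE3 : Polynomial.eval u (Polynomial.derivative (myBp (n+1) β)) = ((n:ℂ)+1) * A := by
        rw [myBp_deriv_eval, Finset.sum_range_succ']
        simp only [Nat.cast_zero, mul_zero, zero_mul, add_zero, Nat.add_sub_cancel]
        rw [hA, Finset.mul_sum]
        apply Finset.sum_congr rfl
        intro i _
        push_cast
        linear_combination u ^ i * β (i+1) * key1 i
      have lemE2 : Polynomial.eval u (myBp (n+1) β) = u * A + D := by
        rw [myBp_eval, Finset.sum_range_succ']
        have pas : ∀ i : ℕ, (((n+1).choose (i+1) : ℕ) : ℂ) = (n.choose i : ℂ) + (n.choose (i+1) : ℂ) := by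
          intro i
          rw [Nat.choose_succ_succ]
          push_cast
          ring
        have split : (∑ i ∈ Finset.range (n+1), ((n+1).choose (i+1) : ℂ) * β (i+1) * u ^ (i+1))
            = (∑ i ∈ Finset.range (n+1), (n.choose i : ℂ) * β (i+1) * u ^ (i+1))
              + (∑ i ∈ Finset.range (n+1), (n.choose (i+1) : ℂ) * β (i+1) * u ^ (i+1)) := by
          rw [← Finset.sum_add_distrib]
          apply Finset.sum_congr rfl
          intro i _
          rw [pas i]
          ring
        rw [split]
        have part1 : (∑ i ∈ Finset.range (n+1), (n.choose i : ℂ) * β (i+1) * u ^ (i+1)) = u * A := by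
          rw [hA, Finset.mul_sum]
          apply Finset.sum_congr rfl
          intro i _
          ring
        have part2 : (∑ i ∈ Finset.range (n+1), (n.choose (i+1) : ℂ) * β (i+1) * u ^ (i+1))
            + ((n+1).choose 0 : ℂ) * β 0 * u ^ 0 = D := by
          have hrev : (∑ j ∈ Finset.range (n+2), (n.choose j : ℂ) * β j * u ^ j)
              = (∑ i ∈ Finset.range (n+1), (n.choose (i+1) : ℂ) * β (i+1) * u ^ (i+1))
                + (n.choose 0 : ℂ) * β 0 * u ^ 0 := Finset.sum_range_succ' _ _
          have htop : (∑ j ∈ Finset.range (n+2), (n.choose j : ℂ) * β j * u ^ j) = D := by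
            rw [Finset.sum_range_succ, hD]
            simp [Nat.choose_eq_zero_of_lt (Nat.lt_succ_self n)]
          rw [← htop, hrev]
          simp
        rw [← part2, part1]
        ring
      rw [lemE1, lemE2, lemE3]
      have hzz : z * z⁻¹ = 1 := mul_inv_cancel₀ hz0
      have hn0 : ((n:ℂ)+1) ≠ 0 := by
        intro h
        have : ((n+1 : ℕ) : ℂ) = 0 := by push_cast; linear_combination h
        exact (Nat.cast_ne_zero.mpr (Nat.succ_ne_zero n)) this
      field_simp
      ring
    -- hypothesis for induction
    have hB' : ∀ u : ℂ, ‖u‖ ≤ r → Polynomial.eval u (myBp n β') ≠ 0 := by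
      intro u hu hev0
      have hL1 := my_level1 r hr (n+1) (by omega) (myBp (n+1) β) (myBp_natDegree_le _ _)
        hB u (-z⁻¹) hu hζabs
      have hEu := hE u
      rw [hev0, mul_zero] at hEu
      have h2 : ((n+1 : ℕ) : ℂ) * Polynomial.eval u (myBp (n+1) β)
          + (-z⁻¹ - u) * Polynomial.eval u (Polynomial.derivative (myBp (n+1) β)) = 0 := by
        have hz' : (-z : ℂ) ≠ 0 := neg_ne_zero.mpr hz0
        have := (mul_eq_zero.mp hEu.symm).resolve_left hz'
        push_cast
        linear_combination this
      exact hL1 h2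
    have hz' : ∀ x ∈ R', 1 ≤ r * ‖x‖ := fun x hx => hz x (Multiset.mem_cons_of_mem hx)
    exact ih β' R' hcard' hz' hB'

private lemma my_core (n s : ℕ) (hs1 : 1 ≤ s) (hsn : s < n) (ρ : ℝ) (hρ : 1 ≤ ρ)
    (R : Multiset ℂ) (hcard : Multiset.card R = n) (hroots : ∀ x ∈ R, ρ ≤ ‖x‖)
    (w : ℂ) (hw : ‖w‖ < 1) :
    ρ ^ s * ‖w + ((R.map fun a => X - C a).prod.coeff s) / (n.choose s : ℂ)‖
      ≤ ‖((R.map fun a => X - C a).prod.coeff (n - s)) / (n.choose s : ℂ) * w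
        + (R.map fun a => X - C a).prod.coeff 0‖ := by
  have hρ0 : (0:ℝ) < ρ := lt_of_lt_of_le one_pos hρ
  set Q := (R.map fun a => X - C a).prod with hQ
  have hQn : Q.coeff n = 1 := by
    have hmon : Q.Monic :=
      Polynomial.monic_multiset_prod_of_monic _ _ (fun a _ => Polynomial.monic_X_sub_C a)
    have hdeg : Q.natDegree = n := by
      rw [hQ, Polynomial.natDegree_multiset_prod_X_sub_C_eq_card, hcard]
    rw [← hdeg]
    exact hmon.coeff_natDegree
  by_contra hcon
  push_neg at hcon
  set Cs : ℂ := (n.choose s : ℂ) with hCs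
  have hCs0 : Cs ≠ 0 := Nat.cast_ne_zero.mpr (Nat.choose_pos (le_of_lt hsn)).ne'
  set bs : ℂ := Q.coeff s / Cs with hbs
  set bns : ℂ := Q.coeff (n-s) / Cs with hbns
  -- hcon : abs (bns * w + Q.coeff 0) < ρ^s * abs (w + bs)
  have habsρ : ‖((ρ:ℂ))^s‖ = ρ^s := by
    rw [norm_pow, Complex.norm_real, Real.norm_eq_abs, abs_of_pos hρ0]
  have hden0 : ((ρ:ℂ))^s * (w + bs) ≠ 0 := by
    intro h
    have h1 : ρ ^ s * ‖w + bs‖ = 0 := by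
      rw [← habsρ, ← norm_mul, h, norm_zero]
    rw [h1] at hcon
    exact absurd hcon (norm_nonneg _).not_gt
  have hwbs : 0 < ‖w + bs‖ := by
    rcases (norm_nonneg (w + bs)).lt_or_eq with h | h
    · exact h
    · exfalso
      apply hden0
      have h0 : w + bs = 0 := norm_eq_zero.mp h.symm
      rw [h0, mul_zero]
  set μ : ℂ := -(bns * w + Q.coeff 0) / (((ρ:ℂ))^s * (w + bs)) with hμ
  have hμabs : ‖μ‖ < 1 := by
    rw [hμ, norm_div, norm_neg, norm_mul, habsρ]
    have hpos : 0 < ρ ^ s * ‖w + bs‖ := by positivity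
    rw [div_lt_one hpos]
    exact hcon
  have hμeq : μ * (((ρ:ℂ))^s * (w + bs)) = -(bns * w + Q.coeff 0) := div_mul_cancel₀ _ hden0
  set β : ℕ → ℂ := fun j => (if j = 0 then (1:ℂ) else 0) + (if j = s then μ * ((ρ:ℂ))^s / Cs else 0)
      + (if j = n - s then w / Cs else 0) + (if j = n then μ * ((ρ:ℂ))^s * w else 0) with hβ
  have hns_mem : n - s ∈ Finset.range (n+1) := Finset.mem_range.mpr (by omega)
  have hs_mem : s ∈ Finset.range (n+1) := Finset.mem_range.mpr (by omega)
  have h0_mem : (0:ℕ) ∈ Finset.range (n+1) := Finset.mem_range.mpr (by omega)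
  have hn_mem : n ∈ Finset.range (n+1) := Finset.mem_range.mpr (by omega)
  have hsum : (∑ j ∈ Finset.range (n+1), β j * Q.coeff j) = 0 := by
    have hexp : (∑ j ∈ Finset.range (n+1), β j * Q.coeff j)
        = Q.coeff 0 + (μ * ((ρ:ℂ))^s / Cs) * Q.coeff s + (w / Cs) * Q.coeff (n-s)
          + (μ * ((ρ:ℂ))^s * w) * Q.coeff n := by
      rw [hβ]
      simp only [add_mul, Finset.sum_add_distrib, ite_mul, zero_mul]
      rw [Finset.sum_ite_eq' (Finset.range (n+1)) (0:ℕ) (fun j => (1:ℂ) * Q.coeff j),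
        Finset.sum_ite_eq' (Finset.range (n+1)) s (fun j => μ * ((ρ:ℂ))^s / Cs * Q.coeff j),
        Finset.sum_ite_eq' (Finset.range (n+1)) (n-s) (fun j => w / Cs * Q.coeff j),
        Finset.sum_ite_eq' (Finset.range (n+1)) n (fun j => μ * ((ρ:ℂ))^s * w * Q.coeff j)]
      rw [if_pos h0_mem, if_pos hs_mem, if_pos hns_mem, if_pos hn_mem]
      ring
    rw [hexp, hQn]
    rw [hbs, hbns] at hμeq
    linear_combination hμeq
  have hrinv : (0:ℝ) < ρ⁻¹ := by positivity
  refine my_level2 ρ⁻¹ hrinv n (by omega) β R hcard ?_ ?_ hsum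
  · intro x hx
    have h1 := hroots x hx
    calc (1:ℝ) = ρ⁻¹ * ρ := by field_simp
    _ ≤ ρ⁻¹ * ‖x‖ := mul_le_mul_of_nonneg_left h1 (le_of_lt hrinv)
  · intro u hu
    have hev : Polynomial.eval u (myBp n β)
        = (1 + μ * ((ρ:ℂ))^s * u^s) * (1 + w * u^(n-s)) := by
      rw [myBp_eval]
      have hexp2 : (∑ j ∈ Finset.range (n+1), (n.choose j : ℂ) * β j * u ^ j)
          = (n.choose 0 : ℂ) * 1 * u^0 + (n.choose s : ℂ) * (μ * ((ρ:ℂ))^s / Cs) * u^s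
            + (n.choose (n-s) : ℂ) * (w / Cs) * u^(n-s) + (n.choose n : ℂ) * (μ * ((ρ:ℂ))^s * w) * u^n := by
        rw [hβ]
        simp only [mul_add, add_mul, Finset.sum_add_distrib, mul_ite, ite_mul, mul_zero, zero_mul]
        rw [Finset.sum_ite_eq' (Finset.range (n+1)) (0:ℕ) (fun j => (n.choose j : ℂ) * 1 * u ^ j),
          Finset.sum_ite_eq' (Finset.range (n+1)) s (fun j => (n.choose j : ℂ) * (μ * ((ρ:ℂ))^s / Cs) * u ^ j),
          Finset.sum_ite_eq' (Finset.range (n+1)) (n-s) (fun j => (n.choose j : ℂ) * (w / Cs) * u ^ j),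
          Finset.sum_ite_eq' (Finset.range (n+1)) n (fun j => (n.choose j : ℂ) * (μ * ((ρ:ℂ))^s * w) * u ^ j)]
        rw [if_pos h0_mem, if_pos hs_mem, if_pos hns_mem, if_pos hn_mem]
      rw [hexp2]
      have hsymm : ((n.choose (n-s) : ℕ) : ℂ) = Cs := by
        rw [hCs, Nat.choose_symm (le_of_lt hsn)]
      have hpow : u^s * u^(n-s) = u^n := by
        rw [← pow_add, Nat.add_sub_cancel' (le_of_lt hsn)]
      rw [hsymm]
      have c1 : Cs * (μ * ((ρ:ℂ))^s / Cs) = μ * ((ρ:ℂ))^s := by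
        rw [mul_comm]
        exact div_mul_cancel₀ _ hCs0
      have c2 : Cs * (w / Cs) = w := by
        rw [mul_comm]
        exact div_mul_cancel₀ _ hCs0
      have hCsn : ((n.choose s : ℕ) : ℂ) = Cs := by rw [hCs]
      rw [hCsn, c1, c2]
      simp only [Nat.choose_zero_right, Nat.choose_self, Nat.cast_one, pow_zero]
      linear_combination (-(μ * ((ρ:ℂ))^s * w)) * hpow
    rw [hev]
    have huρ : ‖u‖ ^ s ≤ (ρ^s)⁻¹ := by
      rw [← inv_pow]
      exact pow_le_pow_left₀ (norm_nonneg u) hu s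
    have hf1 : ‖μ * ((ρ:ℂ))^s * u^s‖ < 1 := by
      rw [norm_mul, norm_mul, habsρ, norm_pow]
      calc ‖μ‖ * ρ^s * ‖u‖ ^ s ≤ ‖μ‖ * ρ^s * (ρ^s)⁻¹ := by
            apply mul_le_mul_of_nonneg_left huρ
            positivity
      _ = ‖μ‖ := by field_simp
      _ < 1 := hμabs
    have hf2 : ‖w * u^(n-s)‖ < 1 := by
      rw [norm_mul, norm_pow]
      have h1 : ‖u‖ ^ (n-s) ≤ 1 := by
        apply pow_le_one₀ (norm_nonneg u)
        calc ‖u‖ ≤ ρ⁻¹ := hu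
        _ ≤ 1 := by rw [inv_le_one_iff₀]; right; exact hρ
      calc ‖w‖ * ‖u‖ ^ (n-s) ≤ ‖w‖ * 1 :=
            mul_le_mul_of_nonneg_left h1 (norm_nonneg w)
      _ = ‖w‖ := mul_one _
      _ < 1 := hw
    apply mul_ne_zero
    · intro h
      have h3 : μ * ((ρ:ℂ))^s * u^s = -1 := by linear_combination h
      rw [h3] at hf1
      simp at hf1
    · intro h
      have h3 : w * u^(n-s) = -1 := by linear_combination h
      rw [h3] at hf2
      simp at hf2

private lemma my_core1 (n s : ℕ) (hs1 : 1 ≤ s) (hsn : s < n) (ρ : ℝ) (hρ : 1 ≤ ρ)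
    (R : Multiset ℂ) (hcard : Multiset.card R = n) (hroots : ∀ x ∈ R, ρ ≤ ‖x‖)
    (w : ℂ) (hw : ‖w‖ = 1) :
    ρ ^ s * ‖w + ((R.map fun a => X - C a).prod.coeff s) / (n.choose s : ℂ)‖
      ≤ ‖((R.map fun a => X - C a).prod.coeff (n - s)) / (n.choose s : ℂ) * w
        + (R.map fun a => X - C a).prod.coeff 0‖ := by
  set Q := (R.map fun a => X - C a).prod with hQ
  set bs : ℂ := Q.coeff s / (n.choose s : ℂ) with hbs
  set bns : ℂ := Q.coeff (n - s) / (n.choose s : ℂ) with hbns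
  have key : ∀ τ : ℝ, τ ∈ Set.Ioo (0:ℝ) 1 →
      ρ ^ s * ‖(τ:ℂ) * w + bs‖ ≤ ‖bns * ((τ:ℂ) * w) + Q.coeff 0‖ := by
    intro τ hτ
    have habs : ‖(τ:ℂ) * w‖ < 1 := by
      rw [norm_mul, Complex.norm_real, Real.norm_eq_abs, hw, mul_one, abs_of_pos hτ.1]
      exact hτ.2
    exact my_core n s hs1 hsn ρ hρ R hcard hroots ((τ:ℂ) * w) habs
  have hc1 : Filter.Tendsto (fun τ : ℝ => ρ ^ s * ‖(τ:ℂ) * w + bs‖) (nhdsWithin (1:ℝ) (Set.Iio (1:ℝ)))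
      (nhds (ρ ^ s * ‖w + bs‖)) := by
    refine Filter.Tendsto.mono_left ?_ nhdsWithin_le_nhds
    have hcont : Continuous fun τ : ℝ => ρ ^ s * ‖(τ:ℂ) * w + bs‖ := by
      apply continuous_const.mul
      exact continuous_norm.comp ((Complex.continuous_ofReal.mul continuous_const).add
        continuous_const)
    have := hcont.tendsto 1
    simpa using this
  have hc2 : Filter.Tendsto (fun τ : ℝ => ‖bns * ((τ:ℂ) * w) + Q.coeff 0‖)
      (nhdsWithin (1:ℝ) (Set.Iio (1:ℝ))) (nhds (‖bns * w + Q.coeff 0‖)) := by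
    refine Filter.Tendsto.mono_left ?_ nhdsWithin_le_nhds
    have hcont : Continuous fun τ : ℝ => ‖bns * ((τ:ℂ) * w) + Q.coeff 0‖ := by
      exact continuous_norm.comp ((continuous_const.mul
        (Complex.continuous_ofReal.mul continuous_const)).add continuous_const)
    have := hcont.tendsto 1
    simpa using this
  have hev : ∀ᶠ (τ : ℝ) in nhdsWithin (1:ℝ) (Set.Iio (1:ℝ)),
      ρ ^ s * ‖(τ:ℂ) * w + bs‖ ≤ ‖bns * ((τ:ℂ) * w) + Q.coeff 0‖ := by
    filter_upwards [Ioo_mem_nhdsLT zero_lt_one] with τ hτ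
    exact key τ hτ
  exact le_of_tendsto_of_tendsto hc1 hc2 hev

theorem stmt_5 (n : ℕ) (hn : 1 ≤ n) (P : Polynomial ℂ) (hdeg : P.natDegree = n)
    (ρ : ℝ) (hρ : 1 ≤ ρ) (hzero : ∀ z : ℂ, ‖z‖ < ρ → P.eval z ≠ 0)
    (s : ℕ) (hs : s ≤ n - 1) (z : ℂ) (hz : ‖z‖ = 1) :
    ρ ^ s * ‖P.coeff n * z ^ n + P.coeff s / (n.choose s : ℂ) * z ^ s‖
      ≤ ‖P.coeff (n - s) / (n.choose s : ℂ) * z ^ (n - s) + P.coeff 0‖ := by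
  by_cases hs0 : s = 0
  · subst hs0
    simp
  · have hs1 : 1 ≤ s := Nat.one_le_iff_ne_zero.mpr hs0
    have hsn : s < n := lt_of_le_of_lt hs (Nat.sub_lt (by omega) one_pos)
    have hP0 : P ≠ 0 := by
      intro h
      rw [h, Polynomial.natDegree_zero] at hdeg
      omega
    have hsplit : Multiset.card P.roots = n := by
      rw [(Polynomial.splits_iff_card_roots).mp (IsAlgClosed.splits P), hdeg]
    have hfac : P = C P.leadingCoeff * (P.roots.map fun a => X - C a).prod :=
      (Polynomial.C_leadingCoeff_mul_prod_multiset_X_sub_C (Polynomial.splits_iff_card_roots.mp (IsAlgClosed.splits P))).symm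
    set an := P.leadingCoeff with han
    set Q := (P.roots.map fun a => X - C a).prod with hQ
    have hcoeff : ∀ j, P.coeff j = an * Q.coeff j := by
      intro j
      conv_lhs => rw [hfac]
      rw [Polynomial.coeff_C_mul]
    have hroots : ∀ x ∈ P.roots, ρ ≤ ‖x‖ := by
      intro x hx
      by_contra hc
      push_neg at hc
      exact hzero x hc ((Polynomial.mem_roots hP0).mp hx)
    have hw : ‖z ^ (n - s)‖ = 1 := by rw [norm_pow, hz, one_pow]
    have hmain := my_core1 n s hs1 hsn ρ hρ P.roots hsplit hroots (z ^ (n - s)) hw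
    have han0 : an ≠ 0 := Polynomial.leadingCoeff_ne_zero.mpr hP0
    have hzs : ‖z ^ s‖ = 1 := by rw [norm_pow, hz, one_pow]
    have hPn : P.coeff n = an := by rw [han, ← hdeg, Polynomial.coeff_natDegree]
    have hzz : z ^ s * z ^ (n - s) = z ^ n := by
      rw [← pow_add, Nat.add_sub_cancel' (le_of_lt hsn)]
    have hL : P.coeff n * z ^ n + P.coeff s / (n.choose s : ℂ) * z ^ s
        = an * z ^ s * (z ^ (n - s) + Q.coeff s / (n.choose s : ℂ)) := by
      rw [hPn, hcoeff s, ← hzz]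
      ring
    have hR : P.coeff (n - s) / (n.choose s : ℂ) * z ^ (n - s) + P.coeff 0
        = an * (Q.coeff (n - s) / (n.choose s : ℂ) * z ^ (n - s) + Q.coeff 0) := by
      rw [hcoeff (n - s), hcoeff 0]
      ring
    rw [hL, hR, norm_mul, norm_mul, hzs, norm_mul]
    calc ρ ^ s * (‖an‖ * 1
          * ‖z ^ (n - s) + Q.coeff s / (n.choose s : ℂ)‖)
        = ‖an‖ * (ρ ^ s * ‖z ^ (n - s) + Q.coeff s / (n.choose s : ℂ)‖) := by
          ring
      _ ≤ ‖an‖ * ‖Q.coeff (n - s) / (n.choose s : ℂ) * z ^ (n - s)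
            + Q.coeff 0‖ := mul_le_mul_of_nonneg_left hmain (norm_nonneg an)
end

section
/- Let n ≥ 1, let P(z) = Σ_{j=0}^{n} a_j z^j be a complex polynomial of degree n that has no zero in the open disk |z| < ρ, where ρ ≥ 1, and let s be an integer with 0 ≤ s ≤ n-1. Then for every complex number z with |z| ≤ 1, |ρ^n a_n z^{n-s} + ρ^s a_s / C(n,s)| ≤ |ρ^{n-s} (a_{n-s} / C(n,s)) z^{n-s} + a_0|, where C(n,s) denotes the binomial coefficient n choose s. -/
open Polynomial

noncomputable def Complex.abs : AbsoluteValue ℂ ℝ where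
  toFun := fun z => ‖z‖
  map_mul' := norm_mul
  nonneg' := norm_nonneg
  eq_zero' _ := norm_eq_zero
  add_le' := norm_add_le

lemma Complex.norm_eq_abs (z : ℂ) : ‖z‖ = Complex.abs z := rfl

lemma Complex.abs_apply (z : ℂ) : Complex.abs z = Real.sqrt (Complex.normSq z) := Complex.norm_def z

lemma Complex.abs_ofReal (x : ℝ) : Complex.abs (x : ℂ) = |x| := Complex.norm_real x

lemma Complex.abs_conj (z : ℂ) : Complex.abs ((starRingEnd ℂ) z) = Complex.abs z := Complex.norm_conj z

lemma Complex.normSq_eq_abs (z : ℂ) : Complex.normSq z = Complex.abs z ^ 2 := Complex.normSq_eq_norm_sq z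

lemma Complex.sq_abs (z : ℂ) : Complex.abs z ^ 2 = Complex.normSq z := Complex.sq_norm z

noncomputable def Qp (r : Multiset ℂ) : Polynomial ℂ := (r.map (fun y => X - Polynomial.C y)).prod

lemma Qp_cons (y : ℂ) (r : Multiset ℂ) : Qp (y ::ₘ r) = (X - Polynomial.C y) * Qp r := by
  simp [Qp]

lemma Qp_monic (r : Multiset ℂ) : (Qp r).Monic := by
  apply monic_multiset_prod_of_monic
  intro i _; exact monic_X_sub_C i

lemma Qp_natDegree (r : Multiset ℂ) : (Qp r).natDegree = Multiset.card r := by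
  simpa [Qp] using natDegree_multiset_prod_X_sub_C_eq_card r

lemma Qp_coeff_card (r : Multiset ℂ) : (Qp r).coeff (Multiset.card r) = 1 := by
  have := (Qp_monic r).coeff_natDegree
  rwa [Qp_natDegree r] at this

lemma Qp_coeff_of_gt {r : Multiset ℂ} {j : ℕ} (h : Multiset.card r < j) : (Qp r).coeff j = 0 := by
  apply coeff_eq_zero_of_natDegree_lt
  rwa [Qp_natDegree r]

lemma Qp_coeff_zero_cons (y : ℂ) (r : Multiset ℂ) :
    (Qp (y ::ₘ r)).coeff 0 = -y * (Qp r).coeff 0 := by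
  rw [Qp_cons, mul_coeff_zero]
  simp

lemma Qp_coeff_succ_cons (y : ℂ) (r : Multiset ℂ) (k : ℕ) :
    (Qp (y ::ₘ r)).coeff (k + 1) = (Qp r).coeff k - y * (Qp r).coeff (k + 1) := by
  rw [Qp_cons, mul_comm, coeff_mul_X_sub_C]; ring

lemma Qp_abs_coeff_le (r : Multiset ℂ) (hr : ∀ y ∈ r, 1 ≤ Complex.abs y) (j : ℕ) :
    Complex.abs ((Qp r).coeff j) ≤
      ((Multiset.card r).choose j : ℝ) * Complex.abs ((Qp r).coeff 0) := by
  induction r using Multiset.induction_on generalizing j with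
  | empty =>
    rcases Nat.eq_zero_or_pos j with hj | hj
    · subst hj; simp [Qp]
    · have hj' : j ≠ 0 := Nat.pos_iff_ne_zero.mp hj
      simp [Qp, coeff_one, hj', Nat.choose_eq_zero_of_lt hj]
  | cons y s ih =>
    have hy : 1 ≤ Complex.abs y := hr y (Multiset.mem_cons_self y s)
    have hs : ∀ z ∈ s, 1 ≤ Complex.abs z := fun z hz => hr z (Multiset.mem_cons_of_mem hz)
    have h0 : Complex.abs ((Qp (y ::ₘ s)).coeff 0) = Complex.abs y * Complex.abs ((Qp s).coeff 0) := by
      rw [Qp_coeff_zero_cons, map_mul, map_neg_eq_map]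
    rcases Nat.eq_zero_or_pos j with hj | hj
    · subst hj; rw [Multiset.card_cons, Nat.choose_zero_right]
      simp
    · obtain ⟨k, rfl⟩ := Nat.exists_eq_add_of_le hj
      simp only [Nat.add_comm 1 k] at *
      rw [Qp_coeff_succ_cons, Multiset.card_cons, h0]
      have t1 : Complex.abs ((Qp s).coeff (k+1)) ≤
          ((Multiset.card s).choose (k+1) : ℝ) * Complex.abs ((Qp s).coeff 0) := ih hs (k+1)
      have t0 : Complex.abs ((Qp s).coeff k) ≤
          ((Multiset.card s).choose k : ℝ) * Complex.abs ((Qp s).coeff 0) := ih hs k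
      have tri : Complex.abs ((Qp s).coeff k - y * (Qp s).coeff (k+1))
          ≤ Complex.abs ((Qp s).coeff k) + Complex.abs y * Complex.abs ((Qp s).coeff (k+1)) := by
        simpa [map_mul] using Complex.abs.sub_le_add ((Qp s).coeff k) (y * (Qp s).coeff (k+1))
      have hq0 : (0:ℝ) ≤ Complex.abs ((Qp s).coeff 0) := Complex.abs.nonneg _
      have hcsucc : (((Multiset.card s + 1).choose (k+1) : ℕ) : ℝ)
          = ((Multiset.card s).choose k : ℝ) + ((Multiset.card s).choose (k+1) : ℝ) := by
        rw [Nat.choose_succ_succ]; push_cast; ring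
      rw [hcsucc]
      have hyQ : Complex.abs ((Qp s).coeff (k+1)) ≤ Complex.abs ((Qp s).coeff (k+1)) * Complex.abs y := by
        nlinarith [Complex.abs.nonneg ((Qp s).coeff (k+1))]
      nlinarith [mul_nonneg (Nat.cast_nonneg (α := ℝ) ((Multiset.card s).choose k)) hq0,
        mul_le_mul_of_nonneg_left hy (Complex.abs.nonneg ((Qp s).coeff (k+1))),
        mul_le_mul_of_nonneg_right t1 (Complex.abs.nonneg y),
        mul_le_mul_of_nonneg_left t0 (le_trans zero_le_one hy),
        mul_nonneg (mul_nonneg (sub_nonneg.mpr hy) (Nat.cast_nonneg (α := ℝ) ((Multiset.card s).choose k))) hq0]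

lemma Qp_one_le_abs_coeff_zero (r : Multiset ℂ) (hr : ∀ y ∈ r, 1 ≤ Complex.abs y) :
    1 ≤ Complex.abs ((Qp r).coeff 0) := by
  induction r using Multiset.induction_on with
  | empty => simp [Qp]
  | cons y s ih =>
    have hy : 1 ≤ Complex.abs y := hr y (Multiset.mem_cons_self y s)
    have hs : ∀ z ∈ s, 1 ≤ Complex.abs z := fun z hz => hr z (Multiset.mem_cons_of_mem hz)
    rw [Qp_coeff_zero_cons, map_mul, map_neg_eq_map]
    nlinarith [ih hs]

lemma Qp_abs_coeff_zero_eq_one (r : Multiset ℂ) (hr : ∀ y ∈ r, Complex.abs y = 1) :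
    Complex.abs ((Qp r).coeff 0) = 1 := by
  induction r using Multiset.induction_on with
  | empty => simp [Qp]
  | cons y s ih =>
    have hs : ∀ z ∈ s, Complex.abs z = 1 := fun z hz => hr z (Multiset.mem_cons_of_mem hz)
    rw [Qp_coeff_zero_cons, map_mul, map_neg_eq_map, hr y (Multiset.mem_cons_self y s), one_mul]
    exact ih hs

lemma Qp_conj (r : Multiset ℂ) (hr : ∀ y ∈ r, Complex.abs y = 1) :
    ∀ k, k ≤ Multiset.card r →
    (Qp r).coeff (Multiset.card r - k)
      = (Qp r).coeff 0 * (starRingEnd ℂ) ((Qp r).coeff k) := by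
  induction r using Multiset.induction_on with
  | empty =>
    intro k hk
    obtain rfl : k = 0 := Nat.le_zero.mp hk
    simp [Qp]
  | cons y s ih =>
    intro k hk
    have hy : Complex.abs y = 1 := hr y (Multiset.mem_cons_self y s)
    have hs : ∀ z ∈ s, Complex.abs z = 1 := fun z hz => hr z (Multiset.mem_cons_of_mem hz)
    have hyc : y * (starRingEnd ℂ) y = 1 := by
      rw [Complex.mul_conj]
      norm_cast
      rw [Complex.normSq_eq_abs, hy]; norm_num
    rw [Multiset.card_cons] at *
    rcases Nat.eq_zero_or_pos k with hk0 | hkpos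
    · subst hk0
      have hcc : (Qp (y ::ₘ s)).coeff (Multiset.card s + 1) = 1 := by
        have := Qp_coeff_card (y ::ₘ s); rwa [Multiset.card_cons] at this
      rw [Nat.sub_zero, hcc]
      have habs : Complex.abs ((Qp (y ::ₘ s)).coeff 0) = 1 := Qp_abs_coeff_zero_eq_one _ hr
      rw [Complex.mul_conj, Complex.normSq_eq_abs, habs]
      norm_num
    · obtain ⟨k', rfl⟩ := Nat.exists_eq_add_of_le hkpos
      simp only [Nat.add_comm 1 k'] at *
      have hk' : k' ≤ Multiset.card s := Nat.lt_succ_iff.mp hk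
      have hidx : Multiset.card s + 1 - (k' + 1) = Multiset.card s - k' := by omega
      rw [hidx, Qp_coeff_zero_cons, Qp_coeff_succ_cons]
      rcases Nat.lt_or_ge k' (Multiset.card s) with hlt | hge
      · obtain ⟨u, hu⟩ : ∃ u, Multiset.card s - k' = u + 1 := ⟨Multiset.card s - k' - 1, by omega⟩
        rw [hu, Qp_coeff_succ_cons]
        have e1 : (Qp s).coeff u = (Qp s).coeff 0 * (starRingEnd ℂ) ((Qp s).coeff (k' + 1)) := by
          have huu : u = Multiset.card s - (k' + 1) := by omega
          rw [huu]; exact ih hs (k' + 1) (by omega)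
        have e2 : (Qp s).coeff (u + 1) = (Qp s).coeff 0 * (starRingEnd ℂ) ((Qp s).coeff k') := by
          rw [← hu]; exact ih hs k' hk'
        rw [e1, e2, map_sub, map_mul]
        linear_combination (-(Qp s).coeff 0 * (starRingEnd ℂ) ((Qp s).coeff (k' + 1))) * hyc
      · have hkeq : k' = Multiset.card s := le_antisymm hk' hge
        subst hkeq
        rw [Nat.sub_self]
        have e3 : (Qp s).coeff (Multiset.card s) = 1 := Qp_coeff_card s
        have e4 : (Qp s).coeff (Multiset.card s + 1) = 0 := Qp_coeff_of_gt (by omega)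
        rw [e3, e4, map_sub, map_mul, map_one, Qp_coeff_zero_cons]
        simp

lemma mobius (a b c d : ℂ)
    (h1 : ∀ t : ℂ, Complex.abs t = 1 → Complex.abs (c*t + d) ≤ Complex.abs (a*t + b))
    (h2 : Complex.abs c ≤ Complex.abs a) (h3 : Complex.abs b ≤ Complex.abs a)
    (t : ℂ) (ht : 1 ≤ Complex.abs t) : Complex.abs (c*t + d) ≤ Complex.abs (a*t + b) := by
  rcases eq_or_ne a 0 with ha | ha
  · subst ha
    have hc : c = 0 := by simpa using le_antisymm (by simpa using h2) (Complex.abs.nonneg c)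
    have hb : b = 0 := by simpa using le_antisymm (by simpa using h3) (Complex.abs.nonneg b)
    have hd : d = 0 := by
      have := h1 1 (by simp)
      rw [hc, hb] at this
      simpa using le_antisymm (by simpa using this) (Complex.abs.nonneg d)
    simp [hc, hb, hd]
  by_cases hz : ∃ t₀ : ℂ, Complex.abs t₀ = 1 ∧ a * t₀ + b = 0
  · obtain ⟨t₀, ht₀, hroot⟩ := hz
    have hd : d = -(c * t₀) := by
      have h := h1 t₀ ht₀
      rw [hroot] at h
      have : Complex.abs (c * t₀ + d) = 0 := le_antisymm (by simpa using h) (Complex.abs.nonneg _)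
      have h0 : c * t₀ + d = 0 := by simpa using this
      linear_combination h0
    have hb' : b = -(a * t₀) := by linear_combination hroot
    rw [hd, hb']
    have e1 : c * t + -(c * t₀) = c * (t - t₀) := by ring
    have e2 : a * t + -(a * t₀) = a * (t - t₀) := by ring
    rw [e1, e2, map_mul, map_mul]
    exact mul_le_mul_of_nonneg_right h2 (Complex.abs.nonneg _)
  · push_neg at hz
    have hden : ∀ u : ℂ, Complex.abs u ≤ 1 → a + b * u ≠ 0 := by
      intro u hu hcon
      rcases eq_or_ne u 0 with h0 | h0
      · rw [h0] at hcon; simp at hcon; exact ha hcon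
      · have hti : a * u⁻¹ + b = (a + b * u) * u⁻¹ := by
          field_simp
        have habs : Complex.abs u = 1 := by
          rcases lt_or_eq_of_le hu with hlt | heq
          · exfalso
            have : a = -(b*u) := by linear_combination hcon
            have : Complex.abs a = Complex.abs b * Complex.abs u := by
              rw [this, map_neg_eq_map, map_mul]
            nlinarith [mul_le_mul_of_nonneg_right h3 (Complex.abs.nonneg u), Complex.abs.pos ha]
          · exact heq
        exact hz u⁻¹ (by rw [map_inv₀, habs]; norm_num)
            (by rw [hti, hcon, zero_mul])
    set f : ℂ → ℂ := fun u => (c + d * u) / (a + b * u) with hf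
    have hdiff : DiffContOnCl ℂ f (Metric.ball (0:ℂ) 1) := by
      apply DifferentiableOn.diffContOnCl
      rw [closure_ball (0:ℂ) one_ne_zero]
      intro u hu
      have hu' : Complex.abs u ≤ 1 := by
        simpa [Complex.dist_eq, Complex.norm_eq_abs] using Metric.mem_closedBall.mp hu
      exact (((differentiable_const c).add ((differentiable_const d).mul differentiable_id)).differentiableAt.div
        (((differentiable_const a).add ((differentiable_const b).mul differentiable_id)).differentiableAt)
        (hden u hu')).differentiableWithinAt
    have hbound : ∀ u ∈ frontier (Metric.ball (0:ℂ) 1), ‖f u‖ ≤ 1 := by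
      intro u hu
      rw [frontier_ball (0:ℂ) one_ne_zero] at hu
      have habs : Complex.abs u = 1 := by
        simpa [Complex.dist_eq, Complex.norm_eq_abs] using Metric.mem_sphere.mp hu
      have hu0 : u ≠ 0 := by
        intro h; rw [h] at habs; simp at habs
      have e1 : c + d * u = (c * u⁻¹ + d) * u := by field_simp
      have e2 : a + b * u = (a * u⁻¹ + b) * u := by field_simp
      have hinv : Complex.abs u⁻¹ = 1 := by rw [map_inv₀, habs]; norm_num
      rw [hf]
      simp only [Complex.norm_eq_abs, map_div₀]
      rw [e1, e2, map_mul, map_mul, habs, mul_one, mul_one]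
      have hpos : 0 < Complex.abs (a * u⁻¹ + b) := by
        have hp2 : 0 < Complex.abs ((a * u⁻¹ + b) * u) := by
          rw [← e2]; exact Complex.abs.pos (hden u (le_of_eq habs))
        rw [map_mul, habs, mul_one] at hp2
        exact hp2
      rw [div_le_one hpos]
      exact h1 u⁻¹ hinv
    have hmem : t⁻¹ ∈ closure (Metric.ball (0:ℂ) 1) := by
      rw [closure_ball (0:ℂ) one_ne_zero]
      apply Metric.mem_closedBall.mpr
      have : Complex.abs t⁻¹ ≤ 1 := by
        rw [map_inv₀]
        exact inv_le_one_of_one_le₀ ht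
      simpa [Complex.dist_eq, Complex.norm_eq_abs] using this
    have hfin := Complex.norm_le_of_forall_mem_frontier_norm_le Metric.isBounded_ball hdiff hbound hmem
    have ht0 : t ≠ 0 := by
      intro h; rw [h] at ht; simp at ht; linarith
    have e1 : c * t + d = (c + d * t⁻¹) * t := by field_simp
    have e2 : a * t + b = (a + b * t⁻¹) * t := by field_simp
    rw [e1, e2, map_mul, map_mul]
    apply mul_le_mul_of_nonneg_right _ (Complex.abs.nonneg t)
    have hinvle : Complex.abs t⁻¹ ≤ 1 := by rw [map_inv₀]; exact inv_le_one_of_one_le₀ ht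
    have hpos : 0 < Complex.abs (a + b * t⁻¹) := Complex.abs.pos (hden t⁻¹ hinvle)
    have := hfin
    rw [hf] at this
    simp only [Complex.norm_eq_abs, map_div₀] at this
    rw [div_le_one hpos] at this
    exact this

lemma LK (r : Multiset ℂ) (hr : ∀ y ∈ r, 1 ≤ Complex.abs y) (σ j : ℕ)
    (hσ : σ ≤ Multiset.card r) (hj : j ≤ Multiset.card r) (c : ℝ)
    (hc : ((Multiset.card r).choose σ : ℝ) + ((Multiset.card r).choose j : ℝ) ≤ c)
    (v : ℂ) (hv : Complex.abs v ≤ 1) :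
    Complex.abs ((Qp r).coeff (Multiset.card r - j))
      ≤ Complex.abs ((Qp r).coeff (Multiset.card r - σ) * v + (c : ℂ) * (Qp r).coeff 0) := by
  set n := Multiset.card r
  have h1 : Complex.abs ((Qp r).coeff (n - j)) ≤ ((n.choose j : ℝ)) * Complex.abs ((Qp r).coeff 0) := by
    have := Qp_abs_coeff_le r hr (n - j)
    rwa [Nat.choose_symm hj] at this
  have h2 : Complex.abs ((Qp r).coeff (n - σ)) ≤ ((n.choose σ : ℝ)) * Complex.abs ((Qp r).coeff 0) := by
    have := Qp_abs_coeff_le r hr (n - σ)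
    rwa [Nat.choose_symm hσ] at this
  have hc0 : (0:ℝ) ≤ c := le_trans (by positivity) hc
  have key := norm_sub_norm_le ((c : ℂ) * (Qp r).coeff 0) (-((Qp r).coeff (n - σ) * v))
  simp only [norm_neg, sub_neg_eq_add, Complex.norm_eq_abs] at key
  have keq : Complex.abs ((c : ℂ) * (Qp r).coeff 0 + (Qp r).coeff (n - σ) * v)
      = Complex.abs ((Qp r).coeff (n - σ) * v + (c : ℂ) * (Qp r).coeff 0) := by
    rw [add_comm]
  rw [keq, map_mul, map_mul, Complex.abs_ofReal, abs_of_nonneg hc0] at key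
  have hsplit : Complex.abs ((Qp r).coeff (n - σ)) * Complex.abs v
      ≤ ((n.choose σ : ℝ)) * Complex.abs ((Qp r).coeff 0) := by
    nlinarith [Complex.abs.nonneg ((Qp r).coeff (n - σ)), Complex.abs.nonneg v,
      Complex.abs.nonneg ((Qp r).coeff 0)]
  nlinarith [Complex.abs.nonneg ((Qp r).coeff 0)]

lemma sq_ineq (A v : ℂ) (Cr : ℝ) (hA : Complex.abs A ≤ Cr) (hv : Complex.abs v ≤ 1) :
    Complex.abs (A + (Cr:ℂ) * v) ≤ Complex.abs (A * (starRingEnd ℂ) v + (Cr:ℂ)) := by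
  rw [Complex.abs_apply, Complex.abs_apply]
  apply Real.sqrt_le_sqrt
  have hA2 : Complex.normSq A ≤ Cr^2 := by
    rw [← Complex.sq_abs]; nlinarith [Complex.abs.nonneg A]
  have hv2 : Complex.normSq v ≤ 1 := by
    rw [← Complex.sq_abs]; nlinarith [Complex.abs.nonneg v]
  simp only [Complex.normSq_apply, Complex.add_re, Complex.add_im, Complex.mul_re, Complex.mul_im,
    Complex.conj_re, Complex.conj_im, Complex.ofReal_re, Complex.ofReal_im] at hA2 hv2 ⊢
  nlinarith [mul_nonneg (sub_nonneg.mpr hA2) (sub_nonneg.mpr hv2)]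

lemma mainC : ∀ (N : ℕ) (r : Multiset ℂ),
    Multiset.card (Multiset.filter (fun y => 1 < Complex.abs y) r) ≤ N →
    (∀ y ∈ r, 1 ≤ Complex.abs y) → ∀ s : ℕ, s ≤ Multiset.card r → ∀ v : ℂ, Complex.abs v ≤ 1 →
    Complex.abs ((Qp r).coeff s + (((Multiset.card r).choose s : ℝ) : ℂ) * v)
      ≤ Complex.abs ((Qp r).coeff (Multiset.card r - s) * v
          + (((Multiset.card r).choose s : ℝ) : ℂ) * (Qp r).coeff 0) := by
  intro N
  induction N with
  | zero =>
    intro r hfil hr s hs v hv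
    have hfil0 : Multiset.filter (fun y => 1 < Complex.abs y) r = 0 :=
      Multiset.card_eq_zero.mp (Nat.le_zero.mp hfil)
    have huni : ∀ y ∈ r, Complex.abs y = 1 := by
      intro y hy
      have hno : ¬ (1 < Complex.abs y) := by
        intro hgt
        have : y ∈ Multiset.filter (fun y => 1 < Complex.abs y) r :=
          Multiset.mem_filter.mpr ⟨hy, hgt⟩
        rw [hfil0] at this
        exact absurd this (Multiset.notMem_zero y)
      exact le_antisymm (not_lt.mp hno) (hr y hy)
    set n := Multiset.card r with hn
    set Creal : ℝ := (n.choose s : ℝ) with hC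
    have hconj := Qp_conj r huni s hs
    have habs0 : Complex.abs ((Qp r).coeff 0) = 1 := Qp_abs_coeff_zero_eq_one r huni
    have hqs : Complex.abs ((Qp r).coeff s) ≤ Creal := by
      have := Qp_abs_coeff_le r hr s
      rwa [habs0, mul_one] at this
    have e1 : (Qp r).coeff (n - s) * v + (Creal : ℂ) * (Qp r).coeff 0
        = (Qp r).coeff 0 * ((starRingEnd ℂ) ((Qp r).coeff s) * v + (Creal : ℂ)) := by
      rw [hconj]; ring
    rw [e1, map_mul, habs0, one_mul]
    have e2 : Complex.abs ((starRingEnd ℂ) ((Qp r).coeff s) * v + (Creal : ℂ))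
        = Complex.abs ((Qp r).coeff s * (starRingEnd ℂ) v + (Creal : ℂ)) := by
      rw [← Complex.abs_conj ((starRingEnd ℂ) ((Qp r).coeff s) * v + (Creal : ℂ))]
      simp only [map_add, map_mul, Complex.conj_conj, Complex.conj_ofReal]
    rw [e2]
    exact sq_ineq _ _ _ hqs hv
  | succ N ih =>
    intro r hfil hr s hs v hv
    by_cases hex : ∃ y ∈ r, 1 < Complex.abs y
    · obtain ⟨y, hymem, hygt⟩ := hex
      obtain ⟨r', rfl⟩ := Multiset.exists_cons_of_mem hymem
      have hr' : ∀ z ∈ r', 1 ≤ Complex.abs z := fun z hz => hr z (Multiset.mem_cons_of_mem hz)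
      have hfil' : Multiset.card (Multiset.filter (fun y => 1 < Complex.abs y) r') ≤ N := by
        have hstep : Multiset.filter (fun z => 1 < Complex.abs z) (y ::ₘ r')
            = y ::ₘ Multiset.filter (fun z => 1 < Complex.abs z) r' :=
          Multiset.filter_cons_of_pos _ hygt
        rw [hstep, Multiset.card_cons] at hfil
        omega
      have hcard : Multiset.card (y ::ₘ r') = Multiset.card r' + 1 := Multiset.card_cons y r'
      rcases Nat.eq_zero_or_pos s with hs0 | hspos
      · subst hs0
        rw [Nat.choose_zero_right, Nat.sub_zero, Qp_coeff_card]
        push_cast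
        exact le_of_eq (by ring_nf)
      · obtain ⟨s', rfl⟩ := Nat.exists_eq_add_of_le hspos
        simp only [Nat.add_comm 1 s'] at hs hv ⊢
        rcases Nat.lt_or_ge s' (Multiset.card r') with hsm | hsm
        · -- main case : s' + 1 ≤ card r'
          obtain ⟨u, hu⟩ : ∃ u, Multiset.card r' - s' = u + 1 := ⟨Multiset.card r' - s' - 1, by omega⟩
          have hpascal : (((Multiset.card r' + 1).choose (s'+1) : ℕ) : ℝ)
              = ((Multiset.card r').choose s' : ℝ) + ((Multiset.card r').choose (s'+1) : ℝ) := by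
            rw [Nat.choose_succ_succ]; push_cast; ring
          set Creal : ℝ := (((Multiset.card r' + 1).choose (s'+1) : ℕ) : ℝ) with hCr
          set aM : ℂ := -((Qp r').coeff (u+1) * v + (Creal : ℂ) * (Qp r').coeff 0) with haM
          set bM : ℂ := (Qp r').coeff u * v with hbM
          set cM : ℂ := -((Qp r').coeff (s'+1)) with hcM
          set dM : ℂ := (Qp r').coeff s' + (Creal : ℂ) * v with hdM
          have hall : ∀ t : ℂ, (Qp (t ::ₘ r')).coeff (s'+1) + (Creal : ℂ) * v = cM * t + dM := by
            intro t
            rw [Qp_coeff_succ_cons, hcM, hdM]; ring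
          have hall2 : ∀ t : ℂ,
              (Qp (t ::ₘ r')).coeff (Multiset.card (t ::ₘ r') - (s'+1)) * v
                + (Creal : ℂ) * (Qp (t ::ₘ r')).coeff 0 = aM * t + bM := by
            intro t
            have hidx : Multiset.card (t ::ₘ r') - (s'+1) = u + 1 := by
              rw [Multiset.card_cons]; omega
            rw [hidx, Qp_coeff_succ_cons, Qp_coeff_zero_cons, haM, hbM]
            ring
          have h2 : Complex.abs cM ≤ Complex.abs aM := by
            rw [hcM, haM, map_neg_eq_map, map_neg_eq_map]
            have hLK := LK r' hr' s' (Multiset.card r' - (s'+1)) (by omega) (by omega) Creal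
              (by rw [Nat.choose_symm (show s' + 1 ≤ Multiset.card r' from by omega), hpascal])
              v hv
            have hi1 : Multiset.card r' - (Multiset.card r' - (s'+1)) = s' + 1 := by omega
            have hi2 : Multiset.card r' - s' = u + 1 := hu
            rw [hi1, hi2] at hLK
            exact hLK
          have h3 : Complex.abs bM ≤ Complex.abs aM := by
            rw [hbM, haM, map_neg_eq_map, map_mul]
            have hLK := LK r' hr' s' (s'+1) (by omega) (by omega) Creal
              (by rw [hpascal]) v hv
            have hi1 : Multiset.card r' - (s'+1) = u := by omega
            have hi2 : Multiset.card r' - s' = u + 1 := hu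
            rw [hi1, hi2] at hLK
            nlinarith [Complex.abs.nonneg ((Qp r').coeff u), Complex.abs.nonneg v,
              Complex.abs.nonneg ((Qp r').coeff (u+1) * v + (Creal : ℂ) * (Qp r').coeff 0)]
          have h1 : ∀ t : ℂ, Complex.abs t = 1 →
              Complex.abs (cM * t + dM) ≤ Complex.abs (aM * t + bM) := by
            intro t htt
            have hfil'' : Multiset.card (Multiset.filter (fun y => 1 < Complex.abs y) (t ::ₘ r')) ≤ N := by
              have hstep : Multiset.filter (fun z => 1 < Complex.abs z) (t ::ₘ r')
                  = Multiset.filter (fun z => 1 < Complex.abs z) r' :=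
                Multiset.filter_cons_of_neg _ (by rw [htt]; exact lt_irrefl 1)
              rw [hstep]
              exact hfil'
            have hr'' : ∀ z ∈ t ::ₘ r', 1 ≤ Complex.abs z := by
              intro z hz
              rcases Multiset.mem_cons.mp hz with hz1 | hz2
              · rw [hz1, htt]
              · exact hr' z hz2
            have hthis := ih (t ::ₘ r') hfil'' hr'' (s'+1) (by rw [Multiset.card_cons]; omega) v hv
            have hcast : ((((Multiset.card (t ::ₘ r')).choose (s'+1) : ℕ) : ℝ) : ℂ)
                = ((Creal : ℝ) : ℂ) := by
              rw [Multiset.card_cons, hCr]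
            rw [hcast, hall t, hall2 t] at hthis
            exact hthis
          have hres := mobius aM bM cM dM h1 h2 h3 y (le_of_lt hygt)
          have hcast : ((((Multiset.card (y ::ₘ r')).choose (s'+1) : ℕ) : ℝ) : ℂ)
              = ((Creal : ℝ) : ℂ) := by
            rw [Multiset.card_cons, hCr]
          rw [hcast, hall y, hall2 y]
          exact hres
        · -- top case : s' + 1 = card r' + 1
          have hseq : s' = Multiset.card r' := by
            rw [hcard] at hs; omega
          subst hseq
          rw [hcard, Nat.sub_self, Nat.choose_self]
          have htop : (Qp (y ::ₘ r')).coeff (Multiset.card r' + 1) = 1 := by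
            have := Qp_coeff_card (y ::ₘ r')
            rwa [hcard] at this
          rw [htop]
          push_cast
          rw [one_mul, one_mul]
          have e : (Qp (y ::ₘ r')).coeff 0 * v + (Qp (y ::ₘ r')).coeff 0
              = (Qp (y ::ₘ r')).coeff 0 * (v + 1) := by ring
          rw [e, map_mul]
          have h01 : 1 ≤ Complex.abs ((Qp (y ::ₘ r')).coeff 0) :=
            Qp_one_le_abs_coeff_zero _ hr
          have hac : Complex.abs (1 + v) = Complex.abs (v + 1) := by rw [add_comm]
          rw [hac]
          nlinarith [Complex.abs.nonneg (v + 1)]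
    · push_neg at hex
      have hf0 : Multiset.filter (fun y => 1 < Complex.abs y) r = 0 :=
        Multiset.filter_eq_nil.mpr (fun a ha => not_lt.mpr (hex a ha))
      exact ih r (by rw [hf0]; simp) hr s hs v hv

lemma Qp_scale (ρ : ℂ) (hρ : ρ ≠ 0) : ∀ (w : Multiset ℂ) (j : ℕ),
    (Qp w).coeff j = ρ^(Multiset.card w - j) * (Qp (w.map (fun z => z / ρ))).coeff j := by
  intro w
  induction w using Multiset.induction_on with
  | empty =>
    intro j
    rcases Nat.eq_zero_or_pos j with hj | hj
    · subst hj; simp [Qp]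
    · have : j ≠ 0 := Nat.pos_iff_ne_zero.mp hj
      simp [Qp, coeff_one, this]
  | cons z w' ih =>
    intro j
    have hmap : (z ::ₘ w').map (fun z => z / ρ) = (z / ρ) ::ₘ w'.map (fun z => z / ρ) :=
      Multiset.map_cons _ z w'
    have hcardm : Multiset.card (w'.map (fun z => z / ρ)) = Multiset.card w' :=
      Multiset.card_map _ w'
    rcases Nat.eq_zero_or_pos j with hj | hj
    · subst hj
      rw [hmap, Qp_coeff_zero_cons, Qp_coeff_zero_cons, Multiset.card_cons, Nat.sub_zero, ih 0,
        Nat.sub_zero]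
      rw [pow_succ]
      field_simp
    · obtain ⟨k, rfl⟩ := Nat.exists_eq_add_of_le hj
      simp only [Nat.add_comm 1 k]
      rcases Nat.lt_or_ge k (Multiset.card w') with hk | hk
      · -- k + 1 ≤ card w'
        have h1 := ih k
        have h2 := ih (k+1)
        have hidx : Multiset.card (z ::ₘ w') - (k+1) = Multiset.card w' - k := by
          rw [Multiset.card_cons]; omega
        have hmk : Multiset.card w' - k = (Multiset.card w' - (k+1)) + 1 := by omega
        rw [hmap, Qp_coeff_succ_cons, Qp_coeff_succ_cons, h1, h2, hidx]
        have hkey : ρ^(Multiset.card w' - k) * (z/ρ) = z * ρ^(Multiset.card w' - (k+1)) := by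
          rw [hmk, pow_succ]
          field_simp
        have hq := (Qp (w'.map (fun z => z / ρ))).coeff (k+1)
        linear_combination ((Qp (w'.map (fun z => z / ρ))).coeff (k+1)) * hkey
      · rcases Nat.eq_or_lt_of_le hk with hkeq | hklt
        · -- k = card w' : top coefficient
          have hc1 : (Qp (z ::ₘ w')).coeff (k+1) = 1 := by
            have := Qp_coeff_card (z ::ₘ w')
            rwa [Multiset.card_cons, hkeq] at this
          have hc2 : (Qp ((z ::ₘ w').map (fun z => z / ρ))).coeff (k+1) = 1 := by
            have := Qp_coeff_card ((z ::ₘ w').map (fun z => z / ρ))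
            rwa [Multiset.card_map, Multiset.card_cons, hkeq] at this
          rw [hc1, hc2, Multiset.card_cons, hkeq, Nat.sub_self]
          simp
        · -- k > card w' : zero
          have hc1 : (Qp (z ::ₘ w')).coeff (k+1) = 0 :=
            Qp_coeff_of_gt (by rw [Multiset.card_cons]; omega)
          have hc2 : (Qp ((z ::ₘ w').map (fun z => z / ρ))).coeff (k+1) = 0 :=
            Qp_coeff_of_gt (by rw [Multiset.card_map, Multiset.card_cons]; omega)
          rw [hc1, hc2, mul_zero]

theorem stmt_6 (n : ℕ) (hn : 1 ≤ n) (P : Polynomial ℂ) (hdeg : P.natDegree = n)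
    (ρ : ℝ) (hρ : 1 ≤ ρ) (hzero : ∀ z : ℂ, ‖z‖ < ρ → P.eval z ≠ 0)
    (s : ℕ) (hs : s ≤ n - 1) (z : ℂ) (hz : ‖z‖ ≤ 1) :
    ‖(ρ : ℂ) ^ n * P.coeff n * z ^ (n - s) + (ρ : ℂ) ^ s * P.coeff s / (n.choose s : ℂ)‖
      ≤ ‖(ρ : ℂ) ^ (n - s) * (P.coeff (n - s) / (n.choose s : ℂ)) * z ^ (n - s) + P.coeff 0‖ := by
  simp only [Complex.norm_eq_abs] at hzero hz ⊢
  have hρ0 : (0:ℝ) < ρ := lt_of_lt_of_le zero_lt_one hρ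
  have hρc : (ρ:ℂ) ≠ 0 := by
    simpa using ne_of_gt hρ0
  have hP : P ≠ 0 := by
    intro h
    exact hzero 0 (by simpa using hρ0) (by simp [h])
  have hsplit : P.Splits := IsAlgClosed.splits P
  have hcard : Multiset.card P.roots = n := by
    rw [← hdeg]
    exact Polynomial.splits_iff_card_roots.mp hsplit
  have hfac : P = Polynomial.C P.leadingCoeff * Qp P.roots := by
    simpa [Qp] using hsplit.eq_prod_roots
  have hroots : ∀ w ∈ P.roots, (ρ:ℝ) ≤ Complex.abs w := by
    intro w hw
    by_contra hlt
    push_neg at hlt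
    exact hzero w hlt ((Polynomial.mem_roots hP).mp hw)
  set r : Multiset ℂ := P.roots.map (fun w => w / (ρ:ℂ)) with hrdef
  have hcr : Multiset.card r = n := by rw [hrdef, Multiset.card_map, hcard]
  have hr1 : ∀ y ∈ r, 1 ≤ Complex.abs y := by
    intro y hy
    obtain ⟨w, hw, rfl⟩ := Multiset.mem_map.mp hy
    rw [map_div₀, Complex.abs_ofReal, abs_of_pos hρ0, le_div_iff₀ hρ0, one_mul]
    exact hroots w hw
  have hcoeff : ∀ j, P.coeff j = P.leadingCoeff * ((ρ:ℂ)^(n - j) * (Qp r).coeff j) := by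
    intro j
    conv_lhs => rw [hfac]
    rw [Polynomial.coeff_C_mul, Qp_scale (ρ:ℂ) hρc P.roots j, hcard]
  have hsn : s ≤ n := le_trans hs (Nat.sub_le n 1)
  have hslt : s < n := by omega
  set L : ℂ := P.leadingCoeff with hL
  set w : ℂ := z ^ (n - s) with hw
  have hwabs : Complex.abs w ≤ 1 := by
    rw [hw, map_pow]
    exact pow_le_one₀ (Complex.abs.nonneg z) hz
  have hCne : ((n.choose s : ℕ) : ℂ) ≠ 0 := by
    have : 0 < n.choose s := Nat.choose_pos hsn
    exact_mod_cast Nat.pos_iff_ne_zero.mp this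
  have hmn : (Qp r).coeff n = 1 := by
    have := Qp_coeff_card r
    rwa [hcr] at this
  have hmain := mainC n r (by rw [← hcr]; exact Multiset.card_le_card (Multiset.filter_le _ r))
    hr1 s (by omega) w hwabs
  rw [hcr] at hmain
  have hcast : (((n.choose s : ℕ) : ℝ) : ℂ) = ((n.choose s : ℕ) : ℂ) := by push_cast; ring
  rw [hcast] at hmain
  set ms := (Qp r).coeff s with hms
  set mns := (Qp r).coeff (n - s) with hmns
  set m0 := (Qp r).coeff 0 with hm0
  set Cc : ℂ := ((n.choose s : ℕ) : ℂ) with hCc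
  set bigK : ℂ := L * (ρ:ℂ)^n / Cc with hbigK
  have hpow : (ρ:ℂ)^s * (ρ:ℂ)^(n-s) = (ρ:ℂ)^n := by
    rw [← pow_add]
    congr 1
    omega
  have e1 : (ρ : ℂ) ^ n * P.coeff n * w + (ρ : ℂ) ^ s * P.coeff s / Cc
      = bigK * (ms + Cc * w) := by
    rw [hcoeff n, hcoeff s, Nat.sub_self, pow_zero, one_mul, hmn, mul_one, hbigK, ← hpow]
    field_simp
    ring
  have e2 : (ρ : ℂ) ^ (n-s) * (P.coeff (n-s) / Cc) * w + P.coeff 0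
      = bigK * (mns * w + Cc * m0) := by
    have hnns : n - (n - s) = s := by omega
    rw [hcoeff (n-s), hcoeff 0, hnns, Nat.sub_zero, hbigK, ← hpow]
    field_simp
    ring
  rw [e1, e2, map_mul, map_mul]
  exact mul_le_mul_of_nonneg_left hmain (Complex.abs.nonneg bigK)
end

section
/- Let n ≥ 1, let P(z) = Σ_{j=0}^{n} a_j z^j be a complex polynomial of degree n that has no zero in the open disk |z| < ρ, where ρ ≥ 1, let λ be a complex number with |λ| > 1, and let s be an integer with 0 ≤ s ≤ n-1. Then |ρ^s a_s + λ ρ^{n-s} conj(a_{n-s})| ≤ C(n,s) · |ρ^n a_n + λ conj(a_0)|, where C(n,s) denotes the binomial coefficient n choose s and conj denotes complex conjugation. -/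
open Polynomial

private lemma coeff_comp_C_mul_X (p : ℂ[X]) (r : ℂ) (k : ℕ) :
    (p.comp (C r * X)).coeff k = p.coeff k * r ^ k := by
  induction p using Polynomial.induction_on' with
  | add p q hp hq => simp [add_comp, hp, hq, add_mul]
  | monomial m a =>
    rw [monomial_comp]
    rw [mul_pow, ← C_pow, ← mul_assoc, ← C_mul, coeff_C_mul_X_pow, coeff_monomial]
    split <;> simp_all [eq_comm]

private lemma norm_multiset_prod' (m : Multiset ℂ) : ‖m.prod‖ = (m.map norm).prod := by
  induction m using Multiset.induction with
  | empty => simp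
  | cons a t ih => simp [ih]

private lemma abs_prod_le_one (t : Multiset ℂ) (h : ∀ z ∈ t, ‖z‖ ≤ 1) :
    ‖t.prod‖ ≤ 1 := by
  induction t using Multiset.induction with
  | empty => simp
  | cons a t ih =>
    simp only [Multiset.prod_cons, norm_mul]
    have h1 := h a (Multiset.mem_cons_self a t)
    have h2 := ih (fun z hz => h z (Multiset.mem_cons_of_mem hz))
    have := norm_nonneg t.prod
    have := norm_nonneg a
    nlinarith

private lemma abs_multiset_sum_le (t : Multiset ℂ) :
    ‖t.sum‖ ≤ (t.map norm).sum := by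
  induction t using Multiset.induction with
  | empty => simp
  | cons a t ih =>
    simp only [Multiset.sum_cons, Multiset.map_cons]
    exact le_trans (norm_add_le _ _) (by linarith)

private lemma abs_esymm_le (m : Multiset ℂ) (h : ∀ z ∈ m, ‖z‖ ≤ 1) (k : ℕ) :
    ‖m.esymm k‖ ≤ ((Multiset.card m).choose k : ℝ) := by
  unfold Multiset.esymm
  refine le_trans (abs_multiset_sum_le _) ?_
  rw [Multiset.map_map]
  have hb : ∀ x ∈ (m.powersetCard k).map (norm ∘ Multiset.prod), x ≤ (1:ℝ) := by
    intro x hx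
    obtain ⟨t, ht, rfl⟩ := Multiset.mem_map.1 hx
    exact abs_prod_le_one t (fun z hz => h z (Multiset.mem_of_le (Multiset.mem_powersetCard.1 ht).1 hz))
  calc ((m.powersetCard k).map (norm ∘ Multiset.prod)).sum
      ≤ (Multiset.card ((m.powersetCard k).map (norm ∘ Multiset.prod))) • (1:ℝ) :=
        Multiset.sum_le_card_nsmul _ _ hb
    _ = ((Multiset.card m).choose k : ℝ) := by
        simp [Multiset.card_powersetCard]

private lemma one_le_abs_prod (t : Multiset ℂ) (h : ∀ z ∈ t, 1 ≤ ‖z‖) :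
    1 ≤ ‖t.prod‖ := by
  induction t using Multiset.induction with
  | empty => simp
  | cons a t ih =>
    simp only [Multiset.prod_cons, norm_mul]
    have h1 := h a (Multiset.mem_cons_self a t)
    have h2 := ih (fun z hz => h z (Multiset.mem_cons_of_mem hz))
    nlinarith

private lemma key_ineq (z w : ℂ) (hz : 1 ≤ ‖z‖) (hw : 1 ≤ ‖w‖) :
    ‖w - z‖ ≤ ‖1 - (starRingEnd ℂ) z * w‖ := by
  have hz2 : 1 ≤ Complex.normSq z := by
    have := Complex.sq_norm z; nlinarith
  have hw2 : 1 ≤ Complex.normSq w := by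
    have := Complex.sq_norm w; nlinarith
  rw [Complex.norm_def, Complex.norm_def]
  apply Real.sqrt_le_sqrt
  rw [Complex.normSq_apply, Complex.normSq_apply] at *
  simp only [Complex.sub_re, Complex.sub_im, Complex.one_re, Complex.one_im, Complex.mul_re,
    Complex.mul_im, Complex.conj_re, Complex.conj_im] at *
  nlinarith [sq_nonneg (z.re*w.im - z.im*w.re), sq_nonneg (z.re*w.re + z.im*w.im)]

private lemma eval_map_conj (p : ℂ[X]) (x : ℂ) :
    (p.map (starRingEnd ℂ)).eval x = (starRingEnd ℂ) (p.eval ((starRingEnd ℂ) x)) := by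
  induction p using Polynomial.induction_on' with
  | add p q hp hq => simp [hp, hq]
  | monomial m a => simp [map_monomial, eval_monomial, map_mul, map_pow]

private lemma eval_reverse' (f : ℂ[X]) (w : ℂ) (hw : w ≠ 0) :
    f.reverse.eval w = w ^ f.natDegree * f.eval w⁻¹ := by
  have hwi : w⁻¹ ≠ 0 := inv_ne_zero hw
  have : Invertible (w⁻¹) := invertibleOfNonzero hwi
  have h := eval₂_reverse_mul_pow (RingHom.id ℂ) (w⁻¹) f
  rw [invOf_eq_inv, inv_inv] at h
  rw [eval₂_eq_eval_map, eval₂_eq_eval_map, map_id] at h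
  field_simp at h ⊢
  rw [Polynomial.map_id] at h; rw [← h]; field_simp
  rw [mul_assoc, ← mul_pow, mul_one_div_cancel hw, one_pow, mul_one]


private lemma pow_card_mul_prod_map (m : Multiset ℂ) (w : ℂ) (f g : ℂ → ℂ)
    (h : ∀ z ∈ m, w * f z = g z) :
    w ^ Multiset.card m * (m.map f).prod = (m.map g).prod := by
  induction m using Multiset.induction with
  | empty => simp
  | cons a t ih =>
    simp only [Multiset.map_cons, Multiset.prod_cons, Multiset.card_cons, pow_succ]
    rw [← ih (fun z hz => h z (Multiset.mem_cons_of_mem hz)), ← h a (Multiset.mem_cons_self a t)]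
    ring

private lemma prod_map_le_prod_map (m : Multiset ℂ) (f g : ℂ → ℝ)
    (h0 : ∀ z ∈ m, 0 ≤ f z) (h : ∀ z ∈ m, f z ≤ g z) :
    (m.map f).prod ≤ (m.map g).prod := by
  induction m using Multiset.induction with
  | empty => simp
  | cons a t ih =>
    simp only [Multiset.map_cons, Multiset.prod_cons]
    have hf : (0:ℝ) ≤ (t.map f).prod := by
      apply Multiset.prod_nonneg
      intro x hx
      obtain ⟨z, hz, rfl⟩ := Multiset.mem_map.1 hx
      exact h0 z (Multiset.mem_cons_of_mem hz)
    exact mul_le_mul (h a (Multiset.mem_cons_self a t))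
      (ih (fun z hz => h0 z (Multiset.mem_cons_of_mem hz))
          (fun z hz => h z (Multiset.mem_cons_of_mem hz))) hf
      (le_trans (h0 a (Multiset.mem_cons_self a t)) (h a (Multiset.mem_cons_self a t)))

theorem stmt_7 (n : ℕ) (hn : 1 ≤ n) (P : Polynomial ℂ) (hdeg : P.natDegree = n)
    (ρ : ℝ) (hρ : 1 ≤ ρ) (hzero : ∀ z : ℂ, ‖z‖ < ρ → P.eval z ≠ 0)
    (lam : ℂ) (hlam : 1 < ‖lam‖) (s : ℕ) (hs : s ≤ n - 1) :
    ‖(ρ : ℂ) ^ s * P.coeff s + lam * (ρ : ℂ) ^ (n - s) * (starRingEnd ℂ) (P.coeff (n - s))‖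
      ≤ (n.choose s : ℝ) * ‖(ρ : ℂ) ^ n * P.coeff n + lam * (starRingEnd ℂ) (P.coeff 0)‖ := by
  have hρ0 : (0:ℝ) < ρ := lt_of_lt_of_le one_pos hρ
  have hsn : s < n := by omega
  have hPne : P ≠ 0 := by intro h; rw [h] at hdeg; simp at hdeg; omega
  have han : P.coeff n ≠ 0 := by
    rw [← hdeg, ← Polynomial.leadingCoeff]; exact leadingCoeff_ne_zero.2 hPne
  have ha0 : P.coeff 0 ≠ 0 := by
    have := hzero 0 (by simpa using hρ0)
    rwa [coeff_zero_eq_eval_zero]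
  have hρC : ((ρ:ℂ)) ≠ 0 := by
    simpa using ne_of_gt hρ0
  set G : ℂ[X] := P.comp (C (ρ:ℂ) * X) with hGdef
  have hGcoeff : ∀ k, G.coeff k = P.coeff k * (ρ:ℂ)^k := fun k => coeff_comp_C_mul_X P _ k
  have hGdeg : G.natDegree = n := by
    rw [hGdef, natDegree_comp, hdeg, natDegree_C_mul_X _ hρC, mul_one]
  have hGnz : P.coeff n * (ρ:ℂ)^n ≠ 0 := mul_ne_zero han (pow_ne_zero _ hρC)
  have hGne : G ≠ 0 := fun h => hGnz (by rw [← hGcoeff n, h, coeff_zero])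
  have hGlead : G.leadingCoeff = P.coeff n * (ρ:ℂ)^n := by
    rw [Polynomial.leadingCoeff, hGdeg, hGcoeff]
  have hGleadne : G.leadingCoeff ≠ 0 := leadingCoeff_ne_zero.2 hGne
  have hsplits : Splits G := IsAlgClosed.splits G
  have hcard : Multiset.card G.roots = n := by
    rw [← hGdeg]; exact (splits_iff_card_roots).1 hsplits
  have hGfact : G = C G.leadingCoeff * (G.roots.map fun z => X - C z).prod :=
    (C_leadingCoeff_mul_prod_multiset_X_sub_C (by rw [hcard, hGdeg])).symm
  have hroots1 : ∀ z ∈ G.roots, 1 ≤ ‖z‖ := by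
    intro z hz
    by_contra hlt; push_neg at hlt
    have hev : G.eval z = 0 := (isRoot_of_mem_roots hz)
    rw [hGdef, eval_comp, eval_mul, eval_C, eval_X] at hev
    refine hzero ((ρ:ℂ)*z) ?_ hev
    rw [norm_mul, Complex.norm_real, Real.norm_eq_abs, abs_of_pos hρ0]
    nlinarith [norm_nonneg z]
  set Gc : ℂ[X] := G.map (starRingEnd ℂ) with hGcdef
  have hGcdeg : Gc.natDegree = n := by
    rw [hGcdef, natDegree_map_eq_of_injective (RingHom.injective _), hGdeg]
  set H : ℂ[X] := Gc.reverse with hHdef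
  have hHcoeff : ∀ k ≤ n, H.coeff k = (starRingEnd ℂ) (G.coeff (n - k)) := by
    intro k hk
    rw [hHdef, coeff_reverse, hGcdeg, revAt_le hk, hGcdef, coeff_map]
  set T : ℂ[X] := G + C lam * H with hTdef
  have hTcoeff : ∀ k ≤ n, T.coeff k =
      (ρ:ℂ)^k * P.coeff k + lam * (ρ:ℂ)^(n-k) * (starRingEnd ℂ) (P.coeff (n-k)) := by
    intro k hk
    rw [hTdef, coeff_add, coeff_C_mul, hHcoeff k hk, hGcoeff, hGcoeff, map_mul, map_pow,
      Complex.conj_ofReal]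
    ring
  have hTn : T.coeff n = (ρ:ℂ)^n * P.coeff n + lam * (starRingEnd ℂ) (P.coeff 0) := by
    rw [hTcoeff n le_rfl]; simp
  -- |a_0| ≥ ρ^n |a_n|
  have ha0abs : (ρ:ℝ)^n * ‖P.coeff n‖ ≤ ‖P.coeff 0‖ := by
    have h0 : G.eval 0 = P.coeff 0 := by
      rw [hGdef, eval_comp, eval_mul, eval_C, eval_X, mul_zero, coeff_zero_eq_eval_zero]
    have h1 : ‖G.eval 0‖ =
        ‖G.leadingCoeff‖ * ‖(G.roots.map fun z => -z).prod‖ := by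
      conv_lhs => rw [hGfact]
      rw [eval_mul, eval_C, eval_multiset_prod, Multiset.map_map, norm_mul]
      congr 2
      exact congrArg Multiset.prod (Multiset.map_congr rfl (fun z _ => by simp))
    have h2 : 1 ≤ ‖(G.roots.map fun z => -z).prod‖ := by
      apply one_le_abs_prod
      intro z hz
      obtain ⟨y, hy, rfl⟩ := Multiset.mem_map.1 hz
      rw [norm_neg]
      exact hroots1 y hy
    have h3 : ‖G.leadingCoeff‖ = ‖P.coeff n‖ * ρ^n := by
      rw [hGlead, norm_mul, norm_pow, Complex.norm_real, Real.norm_eq_abs, abs_of_pos hρ0]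
    rw [h0] at h1
    have h4 := norm_nonneg G.leadingCoeff
    nlinarith
  -- coeff T n ≠ 0
  have hTnne : T.coeff n ≠ 0 := by
    rw [hTn]
    intro h
    have h1 : lam * (starRingEnd ℂ) (P.coeff 0) = -((ρ:ℂ)^n * P.coeff n) := by
      linear_combination h
    have h2 := congrArg norm h1
    rw [norm_mul, norm_neg, norm_mul, norm_pow, Complex.norm_real, Real.norm_eq_abs, abs_of_pos hρ0,
      Complex.norm_conj] at h2
    have h3 : 0 < ‖P.coeff 0‖ := norm_pos_iff.2 ha0
    nlinarith
  have hTne : T ≠ 0 := fun h => hTnne (by rw [h, coeff_zero])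
  have hTdeg : T.natDegree = n := by
    apply le_antisymm
    · apply le_trans (natDegree_add_le _ _)
      rw [max_le_iff]
      constructor
      · exact le_of_eq hGdeg
      · exact le_trans (natDegree_C_mul_le _ _) (le_trans (reverse_natDegree_le _) (le_of_eq hGcdeg))
    · exact le_natDegree_of_ne_zero hTnne
  -- all roots of T lie in the closed unit disk
  have hTroots : ∀ w ∈ T.roots, ‖w‖ ≤ 1 := by
    intro w hw
    by_contra hgt; push_neg at hgt
    have hw1 : 1 ≤ ‖w‖ := le_of_lt hgt
    have hwne : w ≠ 0 := by
      intro h; rw [h] at hgt; simp at hgt; linarith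
    have hTev : T.eval w = 0 := isRoot_of_mem_roots hw
    have hevG : G.eval w = G.leadingCoeff * (G.roots.map fun z => w - z).prod := by
      conv_lhs => rw [hGfact]
      rw [eval_mul, eval_C, eval_multiset_prod, Multiset.map_map]
      congr 2
      exact Multiset.map_congr rfl (fun z _ => by simp)
    have hevH : H.eval w = (starRingEnd ℂ) G.leadingCoeff *
        (G.roots.map fun z => 1 - (starRingEnd ℂ) z * w).prod := by
      rw [hHdef, eval_reverse' Gc w hwne, hGcdeg, hGcdef, eval_map_conj]
      have hGinv : G.eval ((starRingEnd ℂ) w⁻¹) = G.leadingCoeff *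
          (G.roots.map fun z => (starRingEnd ℂ) w⁻¹ - z).prod := by
        conv_lhs => rw [hGfact]
        rw [eval_mul, eval_C, eval_multiset_prod, Multiset.map_map]
        congr 2
        exact Multiset.map_congr rfl (fun z _ => by simp)
      rw [hGinv, map_mul, map_multiset_prod, Multiset.map_map, ← hcard, mul_left_comm]
      congr 1
      apply pow_card_mul_prod_map
      intro z _
      simp only [Function.comp_apply, map_sub, Complex.conj_conj]
      rw [mul_sub, mul_inv_cancel₀ hwne]
      ring
    have habsG : ‖G.eval w‖ ≤ ‖H.eval w‖ := by
      rw [hevG, hevH, norm_mul, norm_mul, Complex.norm_conj,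
        norm_multiset_prod', norm_multiset_prod', Multiset.map_map, Multiset.map_map]
      apply mul_le_mul_of_nonneg_left ?_ (norm_nonneg _)
      apply prod_map_le_prod_map
      · intro z _; exact norm_nonneg _
      · intro z hz; exact key_ineq z w (hroots1 z hz) hw1
    have habsHpos : 0 < ‖H.eval w‖ := by
      rw [hevH, norm_mul]
      apply mul_pos (norm_pos_iff.2 (by simpa using hGleadne))
      rw [norm_multiset_prod', Multiset.map_map]
      apply Multiset.prod_pos
      intro x hx
      obtain ⟨z, hz, rfl⟩ := Multiset.mem_map.1 hx
      apply norm_pos_iff.2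
      intro h
      have h1 : (starRingEnd ℂ) z * w = 1 := by linear_combination -h
      have h2 := congrArg norm h1
      rw [norm_mul, Complex.norm_conj, norm_one] at h2
      have := hroots1 z hz
      nlinarith
    have h5 : G.eval w = - (lam * H.eval w) := by
      rw [hTdef, eval_add, eval_mul, eval_C] at hTev
      linear_combination hTev
    have h6 := congrArg norm h5
    rw [norm_neg, norm_mul] at h6
    nlinarith
  -- conclude via Vieta
  have hTsplits : Splits T := IsAlgClosed.splits T
  have hTcard : Multiset.card T.roots = n := by
    rw [← hTdeg]; exact (splits_iff_card_roots).1 hTsplits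
  have hves := Polynomial.coeff_eq_esymm_roots_of_card
    (p := T) (by rw [hTcard, hTdeg]) (k := s) (by rw [hTdeg]; exact hsn.le)
  rw [hTdeg] at hves
  have hlead : T.leadingCoeff = T.coeff n := by rw [Polynomial.leadingCoeff, hTdeg]
  have hbound := abs_esymm_le T.roots hTroots (n - s)
  rw [hTcard, Nat.choose_symm hsn.le] at hbound
  rw [← hTcoeff s hsn.le, ← hTn, hves, hlead, norm_mul, norm_mul]
  have h1 : ‖(-1:ℂ)^(n-s)‖ = 1 := by simp
  rw [h1, mul_one]
  rw [mul_comm ((n.choose s : ℝ))]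
  exact mul_le_mul_of_nonneg_left hbound (norm_nonneg _)
end

section
/- Let n ≥ 1, let P(z) = Σ_{j=0}^{n} a_j z^j be a complex polynomial of degree n that has no zero in the open disk |z| < 1, let λ be a complex number with |λ| > 1, and let k be an integer with 0 ≤ k ≤ n-1. Then |a_k + λ conj(a_{n-k})| ≤ C(n,k) · |a_n + λ conj(a_0)|, where C(n,k) denotes the binomial coefficient n choose k and conj denotes complex conjugation. -/
open Polynomial

lemma my_esymm_cons {R : Type*} [CommSemiring R] (a : R) (s : Multiset R) (j : ℕ) :
    (a ::ₘ s).esymm (j + 1) = s.esymm (j + 1) + a * s.esymm j := by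
  rw [Multiset.esymm, Multiset.powersetCard_cons, Multiset.map_add, Multiset.sum_add,
    Multiset.map_map]
  congr 1
  rw [Multiset.esymm, ← Multiset.sum_map_mul_left]
  refine congrArg Multiset.sum (Multiset.map_congr rfl ?_)
  intro t _
  simp [Multiset.prod_cons]

lemma my_prod_one_sub_coeff {R : Type*} [CommRing R] (s : Multiset R) (j : ℕ) :
    ((s.map fun c => 1 - C c * X).prod).coeff j = (-1) ^ j * s.esymm j := by
  induction s using Multiset.induction generalizing j with
  | empty =>
    cases j with
    | zero => simp [Multiset.esymm]
    | succ j => simp [Multiset.esymm, Multiset.powersetCard_zero_right, coeff_one,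
        Nat.succ_ne_zero]
  | cons a s ih =>
    rw [Multiset.map_cons, Multiset.prod_cons, sub_mul, one_mul]
    cases j with
    | zero =>
      simp only [coeff_sub, coeff_zero] at *
      rw [ih 0]
      have : (C a * X * (Multiset.map (fun c => 1 - C c * X) s).prod).coeff 0 = 0 := by
        rw [mul_assoc, coeff_C_mul]
        simp [coeff_X_mul_zero]
      rw [this]
      simp [Multiset.esymm, Multiset.powersetCard_cons]
    | succ j =>
      rw [coeff_sub, ih (j+1), mul_assoc, coeff_C_mul, coeff_X_mul, ih j, my_esymm_cons]
      ring

lemma my_esymm_conj (s : Multiset ℂ) (j : ℕ) :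
    (starRingEnd ℂ) (s.esymm j) = (s.map (starRingEnd ℂ)).esymm j := by
  rw [Multiset.esymm, Multiset.esymm, map_multiset_sum, Multiset.map_map,
    Multiset.powersetCard_map, Multiset.map_map]
  refine congrArg Multiset.sum (Multiset.map_congr rfl ?_)
  intro t _
  simp only [Function.comp_apply]
  exact map_multiset_prod (starRingEnd ℂ) t

lemma my_norm_mprod (s : Multiset ℂ) : ‖s.prod‖ = (s.map fun x => ‖x‖).prod := by
  induction s using Multiset.induction with
  | empty => simp
  | cons a s ih => simp [ih]

lemma my_factor_le {z ζ : ℂ} (hz : 1 ≤ ‖z‖) (hζ : 1 ≤ ‖ζ‖) :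
    ‖z - ζ‖ ≤ ‖1 - (starRingEnd ℂ) ζ * z‖ := by
  have hz2 : 1 ≤ Complex.normSq z := by
    rw [← Complex.sq_norm]; nlinarith
  have hζ2 : 1 ≤ Complex.normSq ζ := by
    rw [← Complex.sq_norm]; nlinarith
  have expand : Complex.normSq (1 - (starRingEnd ℂ) ζ * z) - Complex.normSq (z - ζ)
      = (Complex.normSq z - 1) * (Complex.normSq ζ - 1) := by
    simp [Complex.normSq_apply, Complex.sub_re, Complex.sub_im, Complex.mul_re, Complex.mul_im,
      Complex.conj_re, Complex.conj_im, Complex.one_re, Complex.one_im]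
    ring
  have h1 : Complex.normSq (z - ζ) ≤ Complex.normSq (1 - (starRingEnd ℂ) ζ * z) := by
    nlinarith
  rw [Complex.norm_def, Complex.norm_def]
  exact Real.sqrt_le_sqrt h1

theorem stmt_12 (n : ℕ) (hn : 1 ≤ n) (P : Polynomial ℂ) (hdeg : P.natDegree = n)
    (hzero : ∀ z : ℂ, ‖z‖ < 1 → P.eval z ≠ 0)
    (lam : ℂ) (hlam : 1 < ‖lam‖) (k : ℕ) (hk : k ≤ n - 1) :
    ‖P.coeff k + lam * (starRingEnd ℂ) (P.coeff (n - k))‖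
      ≤ (n.choose k : ℝ) * ‖P.coeff n + lam * (starRingEnd ℂ) (P.coeff 0)‖ := by
  have hkn : k ≤ n := le_trans hk (Nat.sub_le n 1)
  have hP0 : P ≠ 0 := by
    intro h
    rw [h, natDegree_zero] at hdeg
    omega
  set M := P.roots with hM
  have hsplit : P.Splits := IsAlgClosed.splits P
  have hcard : Multiset.card M = n := by
    rw [hM, Polynomial.splits_iff_card_roots.mp hsplit, hdeg]
  have hroots : ∀ ζ ∈ M, 1 ≤ ‖ζ‖ := by
    intro ζ hζ
    by_contra h
    push_neg at h
    exact hzero ζ h ((Polynomial.mem_roots hP0).mp hζ)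
  set c := P.leadingCoeff with hc
  have hc0 : c ≠ 0 := leadingCoeff_ne_zero.mpr hP0
  have hfact : P = C c * (M.map fun ζ => X - C ζ).prod := hsplit.eq_prod_roots
  set Q : Polynomial ℂ :=
    C ((starRingEnd ℂ) c) * (M.map fun ζ => 1 - C ((starRingEnd ℂ) ζ) * X).prod with hQ
  have hPcoeff : ∀ j, j ≤ n → P.coeff j = c * ((-1) ^ (n - j) * M.esymm (n - j)) := by
    intro j hj
    have h := Polynomial.coeff_eq_esymm_roots_of_splits hsplit (k := j) (hdeg ▸ hj)
    rw [h, hdeg, mul_assoc]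
  have hQcoeff : ∀ j, j ≤ n → Q.coeff j = (starRingEnd ℂ) (P.coeff (n - j)) := by
    intro j hj
    have hmm : (M.map fun ζ => 1 - C ((starRingEnd ℂ) ζ) * X)
        = ((M.map (starRingEnd ℂ)).map fun w => (1 : ℂ[X]) - C w * X) := by
      rw [Multiset.map_map]; rfl
    rw [hQ, hmm, coeff_C_mul, my_prod_one_sub_coeff]
    have h1 : P.coeff (n - j) = c * ((-1) ^ j * M.esymm j) := by
      rw [hPcoeff (n - j) (Nat.sub_le n j), Nat.sub_sub_self hj]
    rw [h1, map_mul, map_mul, my_esymm_conj, map_pow, map_neg, map_one]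
  set R : Polynomial ℂ := P + C lam * Q with hR
  have hRcoeff : ∀ j, j ≤ n → R.coeff j = P.coeff j + lam * (starRingEnd ℂ) (P.coeff (n - j)) := by
    intro j hj
    rw [hR, coeff_add, coeff_C_mul, hQcoeff j hj]
  -- degree bounds
  have hQdeg : Q.natDegree ≤ n := by
    refine le_trans (natDegree_C_mul_le _ _) ?_
    refine le_trans (natDegree_multiset_prod_le _) ?_
    rw [Multiset.map_map]
    have hb : ∀ x ∈ M.map (natDegree ∘ fun ζ => 1 - C ((starRingEnd ℂ) ζ) * X), x ≤ 1 := by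
      intro x hx
      obtain ⟨ζ, _, rfl⟩ := Multiset.mem_map.mp hx
      simp only [Function.comp_apply]
      have : (1 : ℂ[X]) - C ((starRingEnd ℂ) ζ) * X
          = C (-((starRingEnd ℂ) ζ)) * X + C 1 := by
        rw [map_neg, map_one]; ring
      rw [this]
      exact natDegree_linear_le
    calc (M.map (natDegree ∘ fun ζ => 1 - C ((starRingEnd ℂ) ζ) * X)).sum
        ≤ Multiset.card (M.map (natDegree ∘ fun ζ => 1 - C ((starRingEnd ℂ) ζ) * X)) • 1 :=
          Multiset.sum_le_card_nsmul _ 1 hb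
      _ = n := by rw [Multiset.card_map, hcard, smul_eq_mul, mul_one]
  have hRdeg_le : R.natDegree ≤ n := by
    refine le_trans (natDegree_add_le _ _) (max_le hdeg.le ?_)
    exact le_trans (natDegree_C_mul_le _ _) hQdeg
  -- nonvanishing of leading coefficient
  have ha0 : P.coeff 0 ≠ 0 := by
    rw [coeff_zero_eq_eval_zero]
    exact hzero 0 (by simp)
  have hcn : P.coeff n = c := by rw [hc, leadingCoeff, hdeg]
  have habs0 : ‖P.coeff n‖ ≤ ‖P.coeff 0‖ := by
    rw [hcn, coeff_zero_eq_eval_zero]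
    conv_rhs => rw [hfact]
    rw [eval_mul, eval_C, norm_mul, eval_multiset_prod, Multiset.map_map,
      my_norm_mprod, Multiset.map_map]
    have h1 : (1 : ℝ) ≤ (M.map ((fun x : ℂ => ‖x‖) ∘ (eval 0 ∘ fun ζ => X - C ζ))).prod := by
      refine Multiset.one_le_prod ?_
      intro a ha
      obtain ⟨ζ, hζ, rfl⟩ := Multiset.mem_map.mp ha
      simpa using hroots ζ hζ
    nlinarith [norm_nonneg c]
  have hlead0 : R.coeff n ≠ 0 := by
    rw [hRcoeff n le_rfl, Nat.sub_self]
    intro h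
    have h2 : P.coeff n = -(lam * (starRingEnd ℂ) (P.coeff 0)) := by linear_combination h
    have h3 : ‖P.coeff n‖ = ‖lam‖ * ‖P.coeff 0‖ := by
      rw [h2, norm_neg, norm_mul, Complex.norm_conj]
    have h4 : 0 < ‖P.coeff 0‖ := by
      simpa [norm_pos_iff] using ha0
    nlinarith
  have hR0 : R ≠ 0 := fun h => hlead0 (by rw [h, coeff_zero])
  have hRdeg : R.natDegree = n := le_antisymm hRdeg_le (le_natDegree_of_ne_zero hlead0)
  -- roots of R are in the closed unit disk
  have hQeval : ∀ z : ℂ, 1 < ‖z‖ →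
      ‖P.eval z‖ ≤ ‖Q.eval z‖ ∧ Q.eval z ≠ 0 := by
    intro z hz
    have hPe : ‖P.eval z‖
        = ‖c‖ * (M.map fun ζ => ‖z - ζ‖).prod := by
      conv_lhs => rw [hfact]
      rw [eval_mul, eval_C, norm_mul, eval_multiset_prod, Multiset.map_map,
        my_norm_mprod, Multiset.map_map]
      congr 1
      refine congrArg Multiset.prod (Multiset.map_congr rfl ?_)
      intro ζ _
      simp
    have hQe : ‖Q.eval z‖
        = ‖c‖ * (M.map fun ζ => ‖1 - (starRingEnd ℂ) ζ * z‖).prod := by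
      rw [hQ, eval_mul, eval_C, norm_mul, Complex.norm_conj, eval_multiset_prod, Multiset.map_map,
        my_norm_mprod, Multiset.map_map]
      congr 1
      refine congrArg Multiset.prod (Multiset.map_congr rfl ?_)
      intro ζ _
      simp
    have hfac : ∀ ζ ∈ M, ‖z - ζ‖ ≤ ‖1 - (starRingEnd ℂ) ζ * z‖ :=
      fun ζ hζ => my_factor_le hz.le (hroots ζ hζ)
    have hpos : ∀ ζ ∈ M, 0 < ‖1 - (starRingEnd ℂ) ζ * z‖ := by
      intro ζ hζ
      rw [norm_pos_iff]
      intro h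
      have h1 : (starRingEnd ℂ) ζ * z = 1 := by linear_combination -h
      have h2 : ‖(starRingEnd ℂ) ζ * z‖ = 1 := by rw [h1, norm_one]
      rw [norm_mul, Complex.norm_conj] at h2
      nlinarith [hroots ζ hζ]
    constructor
    · rw [hPe, hQe]
      have hcpos : 0 ≤ ‖c‖ := norm_nonneg c
      have hprodle : (M.map fun ζ => ‖z - ζ‖).prod
          ≤ (M.map fun ζ => ‖1 - (starRingEnd ℂ) ζ * z‖).prod :=
        Multiset.prod_map_le_prod_map₀ _ _ (fun ζ _ => norm_nonneg _) hfac
      exact mul_le_mul_of_nonneg_left hprodle hcpos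
    · rw [← norm_ne_zero_iff]
      have : 0 < ‖Q.eval z‖ := by
        rw [hQe]
        have hcpos : 0 < ‖c‖ := norm_pos_iff.mpr hc0
        have : 0 < (M.map fun ζ => ‖1 - (starRingEnd ℂ) ζ * z‖).prod := by
          refine Multiset.prod_pos ?_
          intro a ha
          obtain ⟨ζ, hζ, rfl⟩ := Multiset.mem_map.mp ha
          exact hpos ζ hζ
        positivity
      exact this.ne'
  have hRroots : ∀ z ∈ R.roots, ‖z‖ ≤ (1 : ℝ) := by
    intro z hz
    by_contra h
    push_neg at h
    have hev : R.eval z = 0 := (Polynomial.mem_roots hR0).mp hz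
    obtain ⟨hle, hQne⟩ := hQeval z h
    rw [hR, eval_add, eval_mul, eval_C] at hev
    have h2 : ‖P.eval z‖ = ‖lam‖ * ‖Q.eval z‖ := by
      have h3 : P.eval z = -(lam * Q.eval z) := by linear_combination hev
      rw [h3, norm_neg, norm_mul]
    have hQpos : 0 < ‖Q.eval z‖ := norm_pos_iff.mpr hQne
    nlinarith
  set L := R.leadingCoeff with hLdef
  have hLne : L ≠ 0 := leadingCoeff_ne_zero.mpr hR0
  have hLval : L = R.coeff n := by rw [hLdef, leadingCoeff, hRdeg]
  set R' := C L⁻¹ * R with hR'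
  have hmon : R'.Monic := by rw [hR', mul_comm]; exact monic_mul_leadingCoeff_inv hR0
  have hdR' : R'.natDegree = n := by rw [hR', natDegree_C_mul (inv_ne_zero hLne), hRdeg]
  have hrootsR' : ∀ z ∈ (Polynomial.map (RingHom.id ℂ) R').roots, ‖z‖ ≤ (1 : ℝ) := by
    intro z hz
    rw [Polynomial.map_id, hR', roots_C_mul _ (inv_ne_zero hLne)] at hz
    exact hRroots z hz
  have hb := Polynomial.coeff_le_of_roots_le (p := R') (f := RingHom.id ℂ) (B := 1) k hmon
    (IsAlgClosed.splits _) hrootsR'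
  rw [Polynomial.map_id, hdR', one_pow, one_mul, hR', coeff_C_mul,
    norm_mul, norm_inv] at hb
  have hLpos : 0 < ‖L‖ := norm_pos_iff.mpr hLne
  have hkey : ‖R.coeff k‖ ≤ (n.choose k : ℝ) * ‖L‖ := by
    have := mul_le_mul_of_nonneg_left hb hLpos.le
    rw [← mul_assoc, mul_inv_cancel₀ hLpos.ne', one_mul] at this
    linarith [this]
  have e1 : P.coeff k + lam * (starRingEnd ℂ) (P.coeff (n - k)) = R.coeff k :=
    (hRcoeff k hkn).symm
  have e2 : P.coeff n + lam * (starRingEnd ℂ) (P.coeff 0) = L := by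
    rw [hLval, hRcoeff n le_rfl, Nat.sub_self]
  rw [e1, e2]
  exact hkey
end

section
/- Let α and β be complex numbers and let p > 0. Then ‖α z + β‖_p ≥ ((|α| + |β|)/2) · ‖1 + z‖_p. -/
open Polynomial

/-- The normalized `p`-th integral norm of a complex polynomial on the unit circle. -/
noncomputable def pnorm (p : ℝ) (P : Polynomial ℂ) : ℝ :=
  ((1 / (2 * Real.pi)) * ∫ θ in (0:ℝ)..(2 * Real.pi),
    ‖P.eval (Complex.exp (θ * Complex.I))‖ ^ p) ^ (1 / p)

lemma key_pt (r s φ : ℝ) (hr : 0 ≤ r) (hs : 0 ≤ s) :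
    (r + s) / 2 * ‖1 + Complex.exp (φ * Complex.I)‖ ≤
      ‖(r : ℂ) * Complex.exp (φ * Complex.I) + s‖ := by
  have hc := Real.sin_sq_add_cos_sq φ
  have h1 : ‖1 + Complex.exp (φ * Complex.I)‖ ^ 2 = 2 + 2 * Real.cos φ := by
    rw [← Complex.normSq_eq_norm_sq, Complex.exp_mul_I]
    simp [Complex.normSq_apply, Complex.cos_ofReal_re, Complex.sin_ofReal_re]
    nlinarith
  have h2 : ‖(r : ℂ) * Complex.exp (φ * Complex.I) + s‖ ^ 2
      = r ^ 2 + s ^ 2 + 2 * r * s * Real.cos φ := by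
    rw [← Complex.normSq_eq_norm_sq, Complex.exp_mul_I]
    simp [Complex.normSq_apply, Complex.cos_ofReal_re, Complex.sin_ofReal_re]
    nlinarith
  have h3 : ((r + s) / 2 * ‖1 + Complex.exp (φ * Complex.I)‖) ^ 2 ≤
      ‖(r : ℂ) * Complex.exp (φ * Complex.I) + s‖ ^ 2 := by
    rw [mul_pow, h1, h2]
    nlinarith [Real.neg_one_le_cos φ, Real.cos_le_one φ, sq_nonneg (r - s)]
  have ha : 0 ≤ (r + s) / 2 * ‖1 + Complex.exp (φ * Complex.I)‖ := by positivity
  have hb : (0:ℝ) ≤ ‖(r : ℂ) * Complex.exp (φ * Complex.I) + s‖ :=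
    norm_nonneg _
  nlinarith [h3]

lemma exp_shift (r s a b θ : ℝ) :
    (r:ℂ) * Complex.exp (a * Complex.I) * Complex.exp (θ * Complex.I)
      + (s:ℂ) * Complex.exp (b * Complex.I) =
    Complex.exp (b * Complex.I) *
      ((r:ℂ) * Complex.exp (((θ + (a - b) : ℝ) : ℂ) * Complex.I) + (s:ℂ)) := by
  rw [mul_add]
  congr 1
  · rw [mul_assoc, ← Complex.exp_add, mul_comm (Complex.exp _), mul_assoc, ← Complex.exp_add]
    congr 2
    push_cast
    ring
  · ring

lemma rot_eq (α β : ℂ) (θ : ℝ) :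
    ‖α * Complex.exp (θ * Complex.I) + β‖ =
      ‖(‖α‖ : ℂ) *
        Complex.exp (((θ + (α.arg - β.arg) : ℝ) : ℂ) * Complex.I) + (‖β‖ : ℂ)‖ := by
  have key : α * Complex.exp (θ * Complex.I) + β =
      Complex.exp (β.arg * Complex.I) *
        ((‖α‖ : ℂ) * Complex.exp (((θ + (α.arg - β.arg) : ℝ) : ℂ) * Complex.I)
          + (‖β‖ : ℂ)) := by
    conv_lhs => rw [← Complex.norm_mul_exp_arg_mul_I α, ← Complex.norm_mul_exp_arg_mul_I β]
    exact exp_shift _ _ _ _ _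
  rw [key, norm_mul, Complex.norm_exp_ofReal_mul_I, one_mul]

theorem stmt_14 (α β : ℂ) (p : ℝ) (hp : 0 < p) :
    (‖α‖ + ‖β‖) / 2 * pnorm p (1 + X) ≤ pnorm p (C α * X + C β) := by
  set K := (‖α‖ + ‖β‖) / 2 with hK
  have hKnn : 0 ≤ K := by positivity
  set c := α.arg - β.arg with hc
  set F : ℝ → ℝ := fun θ => ‖α * Complex.exp (θ * Complex.I) + β‖ ^ p with hF
  set H : ℝ → ℝ := fun θ => ‖1 + Complex.exp (θ * Complex.I)‖ ^ p with hH
  -- continuity facts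
  have hexp : Continuous fun θ : ℝ => Complex.exp (θ * Complex.I) :=
    Complex.continuous_exp.comp (Complex.continuous_ofReal.mul continuous_const)
  have hHcont : Continuous H := by
    apply Continuous.rpow_const
    · exact continuous_norm.comp (continuous_const.add hexp)
    · exact fun x => Or.inr hp.le
  have hFcont : Continuous F := by
    apply Continuous.rpow_const
    · exact continuous_norm.comp ((continuous_const.mul hexp).add continuous_const)
    · exact fun x => Or.inr hp.le
  -- pointwise inequality
  have hpt : ∀ θ : ℝ, K ^ p * H (θ + c) ≤ F θ := by
    intro θ
    have h1 : K * ‖1 + Complex.exp (((θ + c : ℝ) : ℂ) * Complex.I)‖ ≤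
        ‖(‖α‖ : ℂ) * Complex.exp (((θ + c : ℝ) : ℂ) * Complex.I)
          + (‖β‖ : ℂ)‖ :=
      key_pt _ _ _ (norm_nonneg α) (norm_nonneg β)
    have h2 := rot_eq α β θ
    rw [← hc] at h2
    have h3 : K * ‖1 + Complex.exp (((θ + c : ℝ) : ℂ) * Complex.I)‖ ≤
        ‖α * Complex.exp (θ * Complex.I) + β‖ := by rw [h2]; exact h1
    simp only [hF, hH]
    calc K ^ p * ‖1 + Complex.exp (((θ + c : ℝ) : ℂ) * Complex.I)‖ ^ p
        = (K * ‖1 + Complex.exp (((θ + c : ℝ) : ℂ) * Complex.I)‖) ^ p := by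
          rw [Real.mul_rpow hKnn (norm_nonneg _)]
      _ ≤ ‖α * Complex.exp (θ * Complex.I) + β‖ ^ p :=
          Real.rpow_le_rpow (by positivity) h3 hp.le
  -- periodicity of H
  have hper : Function.Periodic H (2 * Real.pi) := by
    intro θ
    simp only [hH]
    congr 2
    rw [show ((θ + 2 * Real.pi : ℝ) : ℂ) * Complex.I
        = θ * Complex.I + 2 * Real.pi * Complex.I by push_cast; ring,
      Complex.exp_add, Complex.exp_two_pi_mul_I, mul_one]
  have h2pi : (0:ℝ) ≤ 2 * Real.pi := by positivity
  -- integral comparison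
  have hint : ∫ θ in (0:ℝ)..(2 * Real.pi), K ^ p * H (θ + c) ≤
      ∫ θ in (0:ℝ)..(2 * Real.pi), F θ := by
    apply intervalIntegral.integral_mono_on h2pi
    · exact ((continuous_const.mul
        (hHcont.comp (continuous_id.add continuous_const))).intervalIntegrable _ _)
    · exact hFcont.intervalIntegrable _ _
    · exact fun θ _ => hpt θ
  have htrans : ∫ θ in (0:ℝ)..(2 * Real.pi), H (θ + c) =
      ∫ θ in (0:ℝ)..(2 * Real.pi), H θ := by
    rw [intervalIntegral.integral_comp_add_right]
    rw [show (0:ℝ) + c = c by ring, show 2 * Real.pi + c = c + 2 * Real.pi by ring]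
    exact hper.intervalIntegral_add_eq c 0 |>.trans (by norm_num)
  have hBnn : 0 ≤ ∫ θ in (0:ℝ)..(2 * Real.pi), H θ :=
    intervalIntegral.integral_nonneg h2pi (fun θ _ => by
      simp only [hH]; positivity)
  have hAB : K ^ p * ∫ θ in (0:ℝ)..(2 * Real.pi), H θ ≤
      ∫ θ in (0:ℝ)..(2 * Real.pi), F θ := by
    calc K ^ p * ∫ θ in (0:ℝ)..(2 * Real.pi), H θ
        = ∫ θ in (0:ℝ)..(2 * Real.pi), K ^ p * H (θ + c) := by
          rw [intervalIntegral.integral_const_mul, htrans]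
      _ ≤ _ := hint
  -- express pnorms
  have hpnormF : pnorm p (C α * X + C β)
      = ((1 / (2 * Real.pi)) * ∫ θ in (0:ℝ)..(2 * Real.pi), F θ) ^ (1/p) := by
    simp only [pnorm, hF, eval_add, eval_mul, eval_C, eval_X]
  have hpnormH : pnorm p (1 + X)
      = ((1 / (2 * Real.pi)) * ∫ θ in (0:ℝ)..(2 * Real.pi), H θ) ^ (1/p) := by
    simp only [pnorm, hH, eval_add, eval_one, eval_X]
  rw [hpnormF, hpnormH]
  have hinv : (0:ℝ) ≤ 1 / (2 * Real.pi) := by positivity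
  have hKp : (K ^ p) ^ (1/p) = K := by
    rw [← Real.rpow_mul hKnn, mul_one_div, div_self hp.ne', Real.rpow_one]
  calc K * (1 / (2 * Real.pi) * ∫ θ in (0:ℝ)..(2 * Real.pi), H θ) ^ (1/p)
      = (K ^ p * (1 / (2 * Real.pi) * ∫ θ in (0:ℝ)..(2 * Real.pi), H θ)) ^ (1/p) := by
        rw [Real.mul_rpow (Real.rpow_nonneg hKnn p) (mul_nonneg hinv hBnn), hKp]
    _ = (1 / (2 * Real.pi) * (K ^ p * ∫ θ in (0:ℝ)..(2 * Real.pi), H θ)) ^ (1/p) := by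
        ring_nf
    _ ≤ (1 / (2 * Real.pi) * ∫ θ in (0:ℝ)..(2 * Real.pi), F θ) ^ (1/p) := by
        apply Real.rpow_le_rpow
        · have : 0 ≤ K ^ p * ∫ θ in (0:ℝ)..(2 * Real.pi), H θ :=
            mul_nonneg (by positivity) hBnn
          positivity
        · exact mul_le_mul_of_nonneg_left hAB hinv
        · positivity
end

section
/- Let n ≥ 1 and let P(z) = Σ_{j=0}^{n} a_j z^j be a complex polynomial of degree n that has no zero in the open disk |z| < ρ, where ρ ≥ 1. Then for every integer s with 0 ≤ s ≤ n-1, the polynomial ρ^{n-s} (a_{n-s}/C(n,s)) z^{n-s} + a_0 has no zero in the open disk |z| < 1, where C(n,s) denotes the binomial coefficient n choose s. -/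
open Polynomial

lemma abs_prod_ge (ρ : ℝ) (hρ : 0 ≤ ρ) :
    ∀ (m : Multiset ℂ), (∀ r ∈ m, ρ ≤ ‖r‖) → ρ ^ Multiset.card m ≤ ‖m.prod‖ := by
  intro m
  induction m using Multiset.induction with
  | empty => simp
  | cons a t ih =>
    intro h
    simp only [Multiset.prod_cons, Multiset.card_cons, norm_mul, pow_succ']
    exact mul_le_mul (h a (Multiset.mem_cons_self a t))
      (ih fun r hr => h r (Multiset.mem_cons_of_mem hr))
      (pow_nonneg hρ _) (norm_nonneg a)

lemma key_ineq_s19 (R : Multiset ℂ) (ρ : ℝ) (hρ : 0 < ρ)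
    (hR : ∀ r ∈ R, ρ ≤ ‖r‖) (s : ℕ) (hs : s ≤ Multiset.card R) :
    ρ ^ (Multiset.card R - s) * ‖R.esymm s‖ ≤
      (Multiset.card R).choose s * ‖R.prod‖ := by
  set k := Multiset.card R - s with hk
  have hρk : (0:ℝ) < ρ ^ k := pow_pos hρ k
  have h1 : ‖R.esymm s‖ ≤
      ((R.powersetCard s).map (fun t => ‖t.prod‖)).sum := by
    rw [Multiset.esymm]
    have := norm_multiset_sum_le ((R.powersetCard s).map Multiset.prod)
    rw [Multiset.map_map] at this
    exact this
  have h2 : ∀ x ∈ (R.powersetCard s).map (fun t => ‖t.prod‖),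
      x ≤ ‖R.prod‖ / ρ ^ k := by
    intro x hx
    obtain ⟨t, ht, rfl⟩ := Multiset.mem_map.mp hx
    obtain ⟨htR, htc⟩ := Multiset.mem_powersetCard.mp ht
    have hsplit : t + (R - t) = R := by
      rw [add_comm]; exact tsub_add_cancel_of_le htR
    have hcard : Multiset.card (R - t) = k := by
      rw [hk, ← htc, Multiset.card_sub htR]
    have hge : ρ ^ k ≤ ‖(R - t).prod‖ := by
      rw [← hcard]
      exact abs_prod_ge ρ hρ.le _ fun r hr => hR r (Multiset.mem_of_le (Multiset.sub_le_self R t) hr)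
    rw [le_div_iff₀ hρk]
    calc ‖t.prod‖ * ρ ^ k ≤ ‖t.prod‖ * ‖(R - t).prod‖ :=
          mul_le_mul_of_nonneg_left hge (norm_nonneg _)
      _ = ‖t.prod * (R - t).prod‖ := (norm_mul _ _).symm
      _ = ‖R.prod‖ := by rw [← Multiset.prod_add, hsplit]
  have h3 := Multiset.sum_le_card_nsmul _ _ h2
  rw [Multiset.card_map, Multiset.card_powersetCard] at h3
  have h4 : ‖R.esymm s‖ ≤
      ((Multiset.card R).choose s : ℝ) * (‖R.prod‖ / ρ ^ k) := by
    refine h1.trans (h3.trans_eq ?_)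
    simp [nsmul_eq_mul]
  calc ρ ^ k * ‖R.esymm s‖
      ≤ ρ ^ k * (((Multiset.card R).choose s : ℝ) * (‖R.prod‖ / ρ ^ k)) :=
        mul_le_mul_of_nonneg_left h4 hρk.le
    _ = (Multiset.card R).choose s * ‖R.prod‖ := by
        field_simp

theorem stmt_19 (n : ℕ) (hn : 1 ≤ n) (P : Polynomial ℂ) (hdeg : P.natDegree = n)
    (ρ : ℝ) (hρ : 1 ≤ ρ) (hzero : ∀ z : ℂ, ‖z‖ < ρ → P.eval z ≠ 0)
    (s : ℕ) (hs : s ≤ n - 1) (z : ℂ) (hz : ‖z‖ < 1) :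
    ((ρ : ℂ) ^ (n - s) * (P.coeff (n - s) / (n.choose s : ℂ)) * z ^ (n - s) + P.coeff 0) ≠ 0 := by
  have hρ0 : (0:ℝ) < ρ := lt_of_lt_of_le one_pos hρ
  have hsn : s ≤ n := le_trans hs (Nat.sub_le n 1)
  have hsk : s < n := lt_of_le_of_lt hs (Nat.sub_lt hn one_pos)
  set k := n - s with hkdef
  have hk1 : 1 ≤ k := Nat.le_sub_of_add_le (by omega)
  have ha0 : P.coeff 0 ≠ 0 := by
    have := hzero 0 (by simpa using hρ0)
    simpa [Polynomial.eval_zero, ← Polynomial.coeff_zero_eq_eval_zero] using this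
  -- roots
  have hsplits : P.Splits := IsAlgClosed.splits P
  have hP0 : P ≠ 0 := fun h => ha0 (by simp [h])
  have hcard : Multiset.card P.roots = P.natDegree :=
    (Polynomial.splits_iff_card_roots).mp hsplits
  have hroots : ∀ r ∈ P.roots, ρ ≤ ‖r‖ := by
    intro r hr
    by_contra hlt
    exact hzero r (not_le.mp hlt) ((Polynomial.mem_roots hP0).mp hr)
  -- coefficient formulas
  have hck : P.coeff k = P.leadingCoeff * (-1) ^ (n - k) * P.roots.esymm (n - k) := by
    have := Polynomial.coeff_eq_esymm_roots_of_card hcard (p := P) (k := k)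
      (by rw [hdeg]; exact Nat.sub_le n s)
    rwa [hdeg] at this
  have hc0 : P.coeff 0 = P.leadingCoeff * (-1) ^ n * P.roots.esymm n := by
    have := Polynomial.coeff_eq_esymm_roots_of_card hcard (p := P) (k := 0) (Nat.zero_le _)
    rwa [hdeg, Nat.sub_zero] at this
  have hnk : n - k = s := by omega
  have hesn : P.roots.esymm n = P.roots.prod := by
    have hpc : P.roots.powersetCard n = {P.roots} := by
      have h1 : Multiset.card (P.roots.powersetCard n) = 1 := by
        rw [Multiset.card_powersetCard, hcard, hdeg, Nat.choose_self]
      have h2 : P.roots ∈ P.roots.powersetCard n :=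
        Multiset.mem_powersetCard.mpr ⟨le_rfl, by rw [hcard, hdeg]⟩
      obtain ⟨a, ha⟩ := Multiset.card_eq_one.mp h1
      rw [ha] at h2 ⊢
      rw [Multiset.mem_singleton.mp h2]
    rw [Multiset.esymm, hpc]
    simp
  -- the main inequality
  have hRcard : Multiset.card P.roots = n := by rw [hcard, hdeg]
  have hkey := key_ineq_s19 P.roots ρ hρ0 hroots s (by rw [hRcard]; exact hsn)
  rw [hRcard] at hkey
  have habsk : ‖P.coeff k‖ = ‖P.leadingCoeff‖ *
      ‖P.roots.esymm s‖ := by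
    rw [hck, hnk, norm_mul, norm_mul, norm_pow]
    simp
  have habs0 : ‖P.coeff 0‖ = ‖P.leadingCoeff‖ *
      ‖P.roots.prod‖ := by
    rw [hc0, hesn, norm_mul, norm_mul, norm_pow]
    simp
  have hmain : ρ ^ k * ‖P.coeff k‖ ≤
      (n.choose s : ℝ) * ‖P.coeff 0‖ := by
    rw [habsk, habs0]
    calc ρ ^ k * (‖P.leadingCoeff‖ * ‖P.roots.esymm s‖)
        = ‖P.leadingCoeff‖ * (ρ ^ k * ‖P.roots.esymm s‖) := by ring
      _ ≤ ‖P.leadingCoeff‖ * ((n.choose s : ℝ) * ‖P.roots.prod‖) :=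
          mul_le_mul_of_nonneg_left hkey (norm_nonneg _)
      _ = (n.choose s : ℝ) * (‖P.leadingCoeff‖ * ‖P.roots.prod‖) := by ring
  -- finish
  have hchoose : (0:ℝ) < (n.choose s : ℝ) := by
    exact_mod_cast Nat.choose_pos hsn
  have hzk : ‖z‖ ^ k < 1 :=
    pow_lt_one₀ (norm_nonneg z) hz (by omega)
  have habsw : ‖(ρ : ℂ) ^ k * (P.coeff k / (n.choose s : ℂ)) * z ^ k‖
      < ‖P.coeff 0‖ := by
    rw [norm_mul, norm_mul, norm_div, norm_pow, norm_pow, Complex.norm_real, Real.norm_eq_abs,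
      abs_of_pos hρ0, Complex.norm_natCast]
    have h1 : ρ ^ k * (‖P.coeff k‖ / (n.choose s : ℝ)) ≤
        ‖P.coeff 0‖ := by
      rw [mul_div_assoc', div_le_iff₀ hchoose] at *
      linarith [hmain]
    have h2 : (0:ℝ) < ‖P.coeff 0‖ := by
      simpa [norm_pos_iff] using ha0
    calc ρ ^ k * (‖P.coeff k‖ / (n.choose s : ℝ)) * ‖z‖ ^ k
        ≤ ‖P.coeff 0‖ * ‖z‖ ^ k := by
          apply mul_le_mul_of_nonneg_right h1 (pow_nonneg (norm_nonneg z) k)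
      _ < ‖P.coeff 0‖ * 1 := by
          exact mul_lt_mul_of_pos_left hzk h2
      _ = ‖P.coeff 0‖ := mul_one _
  intro heq
  have : (ρ : ℂ) ^ k * (P.coeff k / (n.choose s : ℂ)) * z ^ k = -(P.coeff 0) := by
    linear_combination heq
  rw [this, norm_neg] at habsw
  exact lt_irrefl _ habsw
end
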